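/- arXiv:math/0309182 — 2 statements merged into one kernel-verified Lean document; each statement's English description precedes it below -/
import Mathlib

section
/- Assume 2(1 + C·h(k)) ≤ 1 + C for every k ∉ {0,0'} with k ∼ 0 or k ∼ 0'. Let A_2 = {η ∈ Ω_n : η(0) = η(0') = 1} and ψ(η) = 1_{A_2^c}(η)·Π_{i∈Λ_n} γ_i^{η(i)}. Then for every β > 0, the function V(η) := (L_β^{n,ρ}ψ)(η)/ψ(η), defined for η ∉ A_2, is increasing on A_2^c: for all η ≤ ζ in Ω_n with η, ζ ∉ A_2, V(η) ≤ V(ζ). -/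
open scoped Classical
noncomputable section

/-- `Λ_n = [-n,n]^d ∩ ℤ^d`. -/
def Lam (d n : ℕ) : Finset (Fin d → ℤ) :=
  Finset.Icc (fun _ => -(n : ℤ)) (fun _ => (n : ℤ))

/-- The sites of `Λ_n`. -/
abbrev Site (d n : ℕ) := {i : Fin d → ℤ // i ∈ Lam d n}

/-- `Ω_n = {0,1}^{Λ_n}` (with `Bool` for `{0,1}`, ordered by `false < true`). -/
abbrev Conf (d n : ℕ) := Site d n → Bool

/-- The nearest-neighbor relation on `ℤ^d`. -/
def Nbr {d : ℕ} (i j : Fin d → ℤ) : Prop := ∑ k, |i k - j k| = 1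

/-- The origin, as a site of `Λ_n`. -/
def site0 (d n : ℕ) : Site d n :=
  ⟨0, by simp [Lam, Finset.mem_Icc, Pi.le_def]⟩

/-- `T^{i,j}η` exchanges the coordinates `i` and `j` of `η`. -/
def exch {d n : ℕ} (i j : Site d n) (η : Conf d n) : Conf d n :=
  fun k => if k = i then η j else if k = j then η i else η k

/-- `σ^i η` flips the coordinate `i` of `η`. -/
def flp {d n : ℕ} (i : Site d n) (η : Conf d n) : Conf d n :=
  fun k => if k = i then !(η k) else η k

/-- `n(i) = #{j ∉ Λ_n : j ∼ i}` (each site of `ℤ^d` has exactly `2d` neighbors). -/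
def nOut {d n : ℕ} (i : Site d n) : ℤ :=
  2 * d - ((Lam d n).filter (fun j => Nbr i.1 j)).card

/-- `κ = √((1-ρ)/ρ)`. -/
def kap (ρ : ℝ) : ℝ := Real.sqrt ((1 - ρ) / ρ)

/-- `κ^{2η(i)-1}`. -/
def bdRate {d n : ℕ} (ρ : ℝ) (η : Conf d n) (i : Site d n) : ℝ :=
  kap ρ ^ (2 * (if η i then (1 : ℤ) else 0) - 1)

/-- The finite-volume SSEP generator with `ρ`-boundary:
`L^{n,ρ}φ(η) = Σ_{i∼j, i,j∈Λ_n}(φ(T^{i,j}η) − φ(η))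
             + Σ_{i∈∂Λ_n} n(i) κ^{2η(i)−1}(φ(σ^iη) − φ(η))`
(the sum over bonds `i ∼ j` is written as half the sum over ordered pairs). -/
def Lse {d n : ℕ} (ρ : ℝ) (φ : Conf d n → ℝ) (η : Conf d n) : ℝ :=
  (∑ i : Site d n, ∑ j : Site d n,
      if Nbr i.1 j.1 then φ (exch i j η) - φ η else 0) / 2
  + ∑ i : Site d n, (nOut i : ℝ) * bdRate ρ η i * (φ (flp i η) - φ η)

/-- `L_β^{n,ρ}φ = L^{n,ρ}φ + (β−1)(φ∘T^{0,0'} − φ)`, where `z'` plays the role of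
the fixed neighbor `0'` of the origin. -/
def Lbeta {d n : ℕ} (ρ β : ℝ) (z' : Site d n) (φ : Conf d n → ℝ) (η : Conf d n) : ℝ :=
  Lse ρ φ η + (β - 1) * (φ (exch (site0 d n) z' η) - φ η)

/-- The matrix of an operator on `Conf d n → ℝ` (entry `(η,ζ)` is the operator
applied to the indicator of `ζ`, evaluated at `η`). -/
def opMatrix {d n : ℕ} (Lop : (Conf d n → ℝ) → Conf d n → ℝ) :
    Matrix (Conf d n) (Conf d n) ℝ :=
  Matrix.of fun η ζ => Lop (fun ξ => if ξ = ζ then 1 else 0) η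

/-- The stopped matrix: rows indexed by `A` are replaced by zero rows. -/
def stopped {d n : ℕ} (A : Set (Conf d n)) (M : Matrix (Conf d n) (Conf d n) ℝ) :
    Matrix (Conf d n) (Conf d n) ℝ :=
  Matrix.of fun η ζ => if η ∈ A then 0 else M η ζ

/-- `P_η(τ_A > t) = (e^{t L̄} 1_{A^c})(η)`. -/
def surv {d n : ℕ} (A : Set (Conf d n)) (M : Matrix (Conf d n) (Conf d n) ℝ)
    (t : ℝ) (η : Conf d n) : ℝ :=
  (NormedSpace.exp (t • stopped A M)).mulVec (fun ζ => if ζ ∈ A then 0 else 1) η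

/-- The product Bernoulli(`ρ`) measure on `Ω_n`. -/
def nuRho {d n : ℕ} (ρ : ℝ) (η : Conf d n) : ℝ :=
  ∏ i, if η i then ρ else 1 - ρ

/-- The law at time `t` conditioned on survival, started from `ν_ρ`:
`T_t(ν_ρ)(φ) = [Σ_η ν_ρ(η)(e^{tL̄}(1_{A^c}φ))(η)] / [Σ_η ν_ρ(η)(e^{tL̄}1_{A^c})(η)]`. -/
def Tt {d n : ℕ} (ρ : ℝ) (A : Set (Conf d n)) (M : Matrix (Conf d n) (Conf d n) ℝ)
    (t : ℝ) (φ : Conf d n → ℝ) : ℝ :=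
  (∑ η, nuRho ρ η *
      (NormedSpace.exp (t • stopped A M)).mulVec
        (fun ζ => if ζ ∈ A then 0 else φ ζ) η) /
    ∑ η, nuRho ρ η * surv A M t η

/-- The set of nearest neighbors of `i` in `ℤ^d`, as a finset. -/
def nbrFinset {d : ℕ} (i : Fin d → ℤ) : Finset (Fin d → ℤ) :=
  (Finset.Icc (i - 1) (i + 1)).filter (fun j => Nbr i j)

/-- `γ_i = 1/(1 + C h(i))`. -/
def gam (C : ℝ) {d : ℕ} (h : (Fin d → ℤ) → ℝ) (i : Fin d → ℤ) : ℝ :=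
  1 / (1 + C * h i)

/-- `ψ(η) = 1_{A₂^c}(η) Π_{i ∈ Λ_n} γ_i^{η(i)}`, where `A₂ = {η : η(0) = η(0') = 1}`
and `z'` plays the role of `0'`. -/
def psiTwo (C : ℝ) {d n : ℕ} (h : (Fin d → ℤ) → ℝ) (z' : Site d n) (η : Conf d n) : ℝ :=
  (if η (site0 d n) = true ∧ η z' = true then 0 else 1) *
    ∏ i : Site d n, if η i then gam C h i.1 else 1

namespace SSEP

variable {d n : ℕ}

lemma nbr_symm {i j : Fin d → ℤ} (h : Nbr i j) : Nbr j i := by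
  unfold Nbr at *
  rw [← h]
  exact Finset.sum_congr rfl fun m _ => abs_sub_comm _ _

lemma nbr_irrefl (i : Fin d → ℤ) : ¬ Nbr i i := by
  unfold Nbr; simp

lemma nbr_ne {i j : Fin d → ℤ} (h : Nbr i j) : i ≠ j := by
  rintro rfl; exact nbr_irrefl i h

lemma nbr_abs_le {i j : Fin d → ℤ} (h : Nbr i j) (m : Fin d) : |i m - j m| ≤ 1 := by
  unfold Nbr at h
  rw [← h]
  exact Finset.single_le_sum (f := fun m => |i m - j m|) (fun m _ => abs_nonneg _)
    (Finset.mem_univ m)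

lemma mem_nbrFinset {i j : Fin d → ℤ} : j ∈ nbrFinset i ↔ Nbr i j := by
  unfold nbrFinset
  rw [Finset.mem_filter, Finset.mem_Icc]
  constructor
  · rintro ⟨_, hn⟩; exact hn
  · intro hn
    refine ⟨⟨fun m => ?_, fun m => ?_⟩, hn⟩
    · have := abs_le.mp (nbr_abs_le hn m)
      simp only [Pi.sub_apply, Pi.one_apply]
      omega
    · have := abs_le.mp (nbr_abs_le hn m)
      simp only [Pi.add_apply, Pi.one_apply]
      omega

/-- the explicit map enumerating neighbors -/
def nbrMap (i : Fin d → ℤ) (p : Fin d × Bool) : Fin d → ℤ :=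
  Function.update i p.1 (i p.1 + if p.2 then 1 else -1)

lemma nbr_nbrMap (i : Fin d → ℤ) (p : Fin d × Bool) : Nbr i (nbrMap i p) := by
  unfold Nbr nbrMap
  rw [Finset.sum_eq_single_of_mem p.1 (Finset.mem_univ _)]
  · rw [Function.update_self]
    rcases p.2 <;> simp
  · intro m _ hm
    rw [Function.update_of_ne hm]
    simp

lemma nbrMap_surj {i j : Fin d → ℤ} (h : Nbr i j) : ∃ p, nbrMap i p = j := by
  classical
  unfold Nbr at h
  have habs : ∀ m, |i m - j m| ≤ 1 := fun m => by
    rw [← h]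
    exact Finset.single_le_sum (f := fun m => |i m - j m|) (fun m _ => abs_nonneg _)
      (Finset.mem_univ m)
  have hex : ∃ m : Fin d, i m ≠ j m := by
    by_contra hc
    push_neg at hc
    rw [Finset.sum_eq_zero (fun m _ => by rw [hc m]; simp)] at h
    exact one_ne_zero h.symm
  obtain ⟨m, hm⟩ := hex
  have h1 : |i m - j m| = 1 :=
    le_antisymm (habs m) (Int.one_le_abs (sub_ne_zero.mpr hm))
  have hrest : ∀ m', m' ≠ m → i m' = j m' := by
    intro m' hm'
    have hsum : ∑ x ∈ Finset.univ.erase m, |i x - j x| = 0 := by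
      have h2 := Finset.sum_erase_add Finset.univ (fun x => |i x - j x|) (Finset.mem_univ m)
      omega
    have h3 := (Finset.sum_eq_zero_iff_of_nonneg
      (fun x _ => abs_nonneg (i x - j x))).mp hsum m'
      (Finset.mem_erase.mpr ⟨hm', Finset.mem_univ m'⟩)
    have := abs_eq_zero.mp h3
    omega
  rcases (abs_eq (by norm_num : (0:ℤ) ≤ 1)).mp h1 with h2 | h2
  · refine ⟨(m, false), funext fun m' => ?_⟩
    unfold nbrMap
    by_cases hm' : m' = m
    · subst hm'
      rw [Function.update_self, if_neg (by simp)]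
      show i m' + -1 = j m'
      omega
    · rw [Function.update_of_ne hm']; exact hrest m' hm'
  · refine ⟨(m, true), funext fun m' => ?_⟩
    unfold nbrMap
    by_cases hm' : m' = m
    · subst hm'
      rw [Function.update_self, if_pos rfl]
      show i m' + 1 = j m'
      omega
    · rw [Function.update_of_ne hm']; exact hrest m' hm'

lemma nbrMap_inj (i : Fin d → ℤ) : Function.Injective (nbrMap i) := by
  rintro ⟨m, b⟩ ⟨m', b'⟩ hpq
  unfold nbrMap at hpq
  by_cases hm : m = m'
  · subst hm
    have h1 := congrFun hpq m
    simp only [Function.update_self] at h1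
    rcases b <;> rcases b' <;> simp_all <;> omega
  · exfalso
    have h1 := congrFun hpq m
    rw [Function.update_self, Function.update_of_ne hm] at h1
    rcases b <;> simp only [if_true, if_false] at h1 <;> omega

lemma nbrFinset_eq (i : Fin d → ℤ) :
    nbrFinset i = Finset.image (nbrMap i) Finset.univ := by
  ext j
  rw [mem_nbrFinset, Finset.mem_image]
  constructor
  · intro hn
    obtain ⟨p, hp⟩ := nbrMap_surj hn
    exact ⟨p, Finset.mem_univ p, hp⟩
  · rintro ⟨p, _, rfl⟩
    exact nbr_nbrMap i p

lemma card_nbrFinset (i : Fin d → ℤ) : (nbrFinset i).card = 2 * d := by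
  rw [nbrFinset_eq, Finset.card_image_of_injective _ (nbrMap_inj i), Finset.card_univ]
  simp [Fintype.card_prod]
  ring

end SSEP
namespace SSEP

variable {d n : ℕ}

/-- weight of one site -/
def wv (C : ℝ) (h : (Fin d → ℤ) → ℝ) (k : Site d n) (b : Bool) : ℝ :=
  if b then gam C h k.1 else 1

/-- the positive part of ψ -/
def Pf (C : ℝ) (h : (Fin d → ℤ) → ℝ) (η : Conf d n) : ℝ :=
  ∏ i : Site d n, wv C h i (η i)

/-- the indicator of `A₂ᶜ` -/
def indA {d n : ℕ} (z' : Site d n) (η : Conf d n) : ℝ :=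
  if η (site0 d n) = true ∧ η z' = true then 0 else 1

lemma psiTwo_eq (C : ℝ) (h : (Fin d → ℤ) → ℝ) (z' : Site d n) (η : Conf d n) :
    psiTwo C h z' η = indA z' η * Pf C h η := rfl

section pos
variable {C : ℝ} {h : (Fin d → ℤ) → ℝ}

lemma A_pos (hC : 0 < C) (h01 : ∀ i, h i ∈ Set.Icc (0:ℝ) 1) (x : Fin d → ℤ) :
    0 < 1 + C * h x := by
  have := (h01 x).1
  nlinarith

lemma gam_pos (hC : 0 < C) (h01 : ∀ i, h i ∈ Set.Icc (0:ℝ) 1) (x : Fin d → ℤ) :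
    0 < gam C h x := by
  unfold gam
  exact div_pos one_pos (A_pos hC h01 x)

lemma gam_eq (x : Fin d → ℤ) : gam C h x = (1 + C * h x)⁻¹ := one_div _

lemma wv_pos (hC : 0 < C) (h01 : ∀ i, h i ∈ Set.Icc (0:ℝ) 1) (k : Site d n) (b : Bool) :
    0 < wv C h k b := by
  unfold wv
  split
  · exact gam_pos hC h01 k.1
  · exact one_pos

lemma Pf_pos (hC : 0 < C) (h01 : ∀ i, h i ∈ Set.Icc (0:ℝ) 1) (η : Conf d n) :
    0 < Pf C h η :=
  Finset.prod_pos fun i _ => wv_pos hC h01 i (η i)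

end pos

section update
variable {C : ℝ} {h : (Fin d → ℤ) → ℝ}

lemma Pf_update (η : Conf d n) (k : Site d n) (c : Bool) :
    Pf C h (Function.update η k c) * wv C h k (η k) = wv C h k c * Pf C h η := by
  unfold Pf
  have h1 : ∀ j : Site d n, wv C h j (Function.update η k c j) =
      Function.update (fun j => wv C h j (η j)) k (wv C h k c) j := by
    intro j
    by_cases hj : j = k
    · subst hj; simp
    · rw [Function.update_of_ne hj, Function.update_of_ne hj]
  rw [Finset.prod_congr rfl (fun j _ => h1 j),
    Finset.prod_update_of_mem (Finset.mem_univ k),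
    ← Finset.mul_prod_erase Finset.univ (fun j => wv C h j (η j)) (Finset.mem_univ k),
    Finset.sdiff_singleton_eq_erase]
  ring

lemma flp_eq_update (i : Site d n) (η : Conf d n) :
    flp i η = Function.update η i (!(η i)) := by
  funext k
  by_cases hk : k = i
  · subst hk; simp [flp]
  · simp [flp, hk, Function.update_of_ne hk]

lemma exch_eq_update {i j : Site d n} (hij : i ≠ j) (η : Conf d n) :
    exch i j η = Function.update (Function.update η i (η j)) j (η i) := by
  funext k
  by_cases hk : k = j
  · subst hk
    rw [Function.update_self]
    simp [exch, Ne.symm hij]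
  · rw [Function.update_of_ne hk]
    by_cases hk' : k = i
    · subst hk'; simp [exch, hij]
    · rw [Function.update_of_ne hk']
      simp [exch, hk, hk']

lemma exch_comm (i j : Site d n) (η : Conf d n) : exch i j η = exch j i η := by
  funext k
  unfold exch
  split_ifs with h1 h2 h2 <;> try rfl
  · subst h1; subst h2; rfl

lemma exch_apply_eq {i j : Site d n} {η : Conf d n} (hs : η i = η j) : exch i j η = η := by
  funext k
  unfold exch
  split_ifs with h1 h2
  · rw [h1]; exact hs.symm
  · rw [h2]; exact hs
  · rfl

lemma Pf_exch {i j : Site d n} (hij : i ≠ j) (η : Conf d n) :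
    Pf C h (exch i j η) * (wv C h i (η i) * wv C h j (η j)) =
      wv C h i (η j) * wv C h j (η i) * Pf C h η := by
  rw [exch_eq_update hij η]
  have e1 := Pf_update (C := C) (h := h) η i (η j)
  have e2 := Pf_update (C := C) (h := h) (Function.update η i (η j)) j (η i)
  rw [Function.update_of_ne (Ne.symm hij)] at e2
  linear_combination (wv C h j (η i)) * e1 + (wv C h i (η i)) * e2

end update

end SSEP
namespace SSEP

variable {d n : ℕ}

/-- exchange term of the potential -/
def tEx (C : ℝ) (h : (Fin d → ℤ) → ℝ) (z' : Site d n) (i j : Site d n) (η : Conf d n) : ℝ :=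
  psiTwo C h z' (exch i j η) / Pf C h η - 1

/-- flip term of the potential -/
def tFl (C : ℝ) (h : (Fin d → ℤ) → ℝ) (z' : Site d n) (i : Site d n) (η : Conf d n) : ℝ :=
  psiTwo C h z' (flp i η) / Pf C h η - 1

/-- the potential `V = Lβψ/ψ`, written as a sum of local terms -/
def Wf (ρ β C : ℝ) (h : (Fin d → ℤ) → ℝ) (z' : Site d n) (η : Conf d n) : ℝ :=
  (∑ i : Site d n, ∑ j : Site d n, if Nbr i.1 j.1 then tEx C h z' i j η else 0) / 2
  + ∑ i : Site d n, (nOut i : ℝ) * bdRate ρ η i * tFl C h z' i η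
  + (β - 1) * tEx C h z' (site0 d n) z' η

lemma indA_eq_one {z' : Site d n} {η : Conf d n}
    (hA : ¬(η (site0 d n) = true ∧ η z' = true)) : indA z' η = 1 := if_neg hA

lemma psiTwo_eq_Pf {C : ℝ} {h : (Fin d → ℤ) → ℝ} {z' : Site d n} {η : Conf d n}
    (hA : ¬(η (site0 d n) = true ∧ η z' = true)) : psiTwo C h z' η = Pf C h η := by
  rw [psiTwo_eq, indA_eq_one hA, one_mul]

lemma V_eq_W {ρ β C : ℝ} {h : (Fin d → ℤ) → ℝ} {z' : Site d n} {η : Conf d n}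
    (hP : Pf C h η ≠ 0) (hA : ¬(η (site0 d n) = true ∧ η z' = true)) :
    Lbeta ρ β z' (psiTwo C h z') η / psiTwo C h z' η = Wf ρ β C h z' η := by
  have hψ : psiTwo C h z' η = Pf C h η := psiTwo_eq_Pf hA
  unfold Lbeta Lse Wf tEx tFl
  rw [hψ]
  rw [add_div, add_div]
  congr 1
  · congr 1
    · rw [div_right_comm]
      congr 1
      rw [Finset.sum_div]
      refine Finset.sum_congr rfl fun i _ => ?_
      rw [Finset.sum_div]
      refine Finset.sum_congr rfl fun j _ => ?_
      split_ifs
      · rw [sub_div, div_self hP]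
      · exact zero_div _
    · rw [Finset.sum_div]
      refine Finset.sum_congr rfl fun i _ => ?_
      rw [mul_div_assoc, sub_div, div_self hP]
  · rw [mul_div_assoc, sub_div, div_self hP]

lemma tEx_eval {C : ℝ} {h : (Fin d → ℤ) → ℝ} {z' : Site d n}
    (hC : 0 < C) (h01 : ∀ i, h i ∈ Set.Icc (0:ℝ) 1)
    {i j : Site d n} (hij : i ≠ j) (η : Conf d n) :
    tEx C h z' i j η =
      indA z' (exch i j η) * (wv C h i (η j) * wv C h j (η i)) /
        (wv C h i (η i) * wv C h j (η j)) - 1 := by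
  unfold tEx
  rw [psiTwo_eq]
  congr 1
  rw [mul_div_assoc, mul_div_assoc]
  congr 1
  rw [div_eq_div_iff (ne_of_gt (Pf_pos hC h01 η))
    (ne_of_gt (mul_pos (wv_pos hC h01 i (η i)) (wv_pos hC h01 j (η j))))]
  exact Pf_exch hij η

lemma tEx_same {C : ℝ} {h : (Fin d → ℤ) → ℝ} {z' : Site d n}
    {i j : Site d n} {η : Conf d n} (hP : Pf C h η ≠ 0) (hs : η i = η j)
    (hA : ¬(η (site0 d n) = true ∧ η z' = true)) :
    tEx C h z' i j η = 0 := by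
  unfold tEx
  rw [exch_apply_eq hs, psiTwo_eq_Pf hA, div_self hP, sub_self]

lemma tFl_eval {C : ℝ} {h : (Fin d → ℤ) → ℝ} {z' : Site d n}
    (hC : 0 < C) (h01 : ∀ i, h i ∈ Set.Icc (0:ℝ) 1)
    (i : Site d n) (η : Conf d n) :
    tFl C h z' i η =
      indA z' (flp i η) * wv C h i (!(η i)) / wv C h i (η i) - 1 := by
  unfold tFl
  rw [psiTwo_eq, flp_eq_update]
  congr 1
  rw [mul_div_assoc, mul_div_assoc]
  congr 1
  rw [div_eq_div_iff (ne_of_gt (Pf_pos hC h01 η)) (ne_of_gt (wv_pos hC h01 i (η i)))]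
  have := Pf_update (C := C) (h := h) η i (!(η i))
  linarith [this]

end SSEP
namespace SSEP

variable {d n : ℕ}

lemma ratio2 {a b : ℝ} (ha : 0 < a) (hb : 0 < b) : 1 - a / b ≤ b / a - 1 := by
  have h2 : b / a - 1 - (1 - a / b) = (a - b) ^ 2 / (a * b) := by
    field_simp
    ring
  have h3 : 0 ≤ (a - b) ^ 2 / (a * b) := div_nonneg (sq_nonneg _) (mul_pos ha hb).le
  linarith

lemma dsum_single {α : Type*} [Fintype α] [DecidableEq α] (F : α → α → ℝ) (k : α)
    (hsym : ∀ i j, F i j = F j i) (hdiag : F k k = 0)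
    (hsupp : ∀ i j, i ≠ k → j ≠ k → F i j = 0) :
    ∑ i, ∑ j, F i j = 2 * ∑ j, F k j := by
  have e1 : ∀ i, i ≠ k → ∑ j, F i j = F k i := by
    intro i hi
    rw [Finset.sum_eq_single_of_mem k (Finset.mem_univ k)
      (fun j _ hj => hsupp i j hi hj)]
    exact hsym i k
  rw [← Finset.sum_erase_add _ _ (Finset.mem_univ k),
    Finset.sum_congr rfl (fun i hi => e1 i (Finset.ne_of_mem_erase hi)),
    Finset.sum_erase_eq_sub (Finset.mem_univ k), hdiag]
  ring

lemma dsum_pair {α : Type*} [Fintype α] [DecidableEq α] (F : α → α → ℝ) (u v : α)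
    (huv : u ≠ v) (hsym : ∀ i j, F i j = F j i) (hdu : F u u = 0) (hdv : F v v = 0)
    (hsupp : ∀ i j, i ≠ u → i ≠ v → j ≠ u → j ≠ v → F i j = 0) :
    ∑ i, ∑ j, F i j = 2 * ∑ j, F u j + 2 * ∑ j, F v j - 2 * F u v := by
  classical
  have e1 : ∀ i, i ≠ u → i ≠ v → ∑ j, F i j = F u i + F v i := by
    intro i hiu hiv
    rw [← Finset.sum_subset (Finset.subset_univ {u, v})
      (fun j _ hj => by
        simp only [Finset.mem_insert, Finset.mem_singleton] at hj
        push_neg at hj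
        exact hsupp i j hiu hiv hj.1 hj.2)]
    rw [Finset.sum_pair huv, hsym i u, hsym i v]
  have hvmem : v ∈ Finset.univ.erase u := Finset.mem_erase.mpr ⟨Ne.symm huv, Finset.mem_univ v⟩
  have split1 : ∑ i, ∑ j, F i j
      = ∑ i ∈ Finset.univ.erase u, ∑ j, F i j + ∑ j, F u j := by
    rw [Finset.sum_erase_add _ _ (Finset.mem_univ u)]
  have split2 : ∑ i ∈ Finset.univ.erase u, ∑ j, F i j
      = ∑ i ∈ (Finset.univ.erase u).erase v, ∑ j, F i j + ∑ j, F v j := by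
    rw [Finset.sum_erase_add _ _ hvmem]
  have e2 : ∑ i ∈ (Finset.univ.erase u).erase v, ∑ j, F i j
      = ∑ i ∈ (Finset.univ.erase u).erase v, (F u i + F v i) := by
    refine Finset.sum_congr rfl fun i hi => ?_
    have hiv := Finset.ne_of_mem_erase hi
    have hiu := Finset.ne_of_mem_erase (Finset.mem_of_mem_erase hi)
    exact e1 i hiu hiv
  have e3 : ∑ i ∈ (Finset.univ.erase u).erase v, F u i = ∑ j, F u j - F u u - F u v := by
    rw [Finset.sum_erase_eq_sub hvmem, Finset.sum_erase_eq_sub (Finset.mem_univ u)]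
  have e4 : ∑ i ∈ (Finset.univ.erase u).erase v, F v i = ∑ j, F v j - F v u - F v v := by
    rw [Finset.sum_erase_eq_sub hvmem, Finset.sum_erase_eq_sub (Finset.mem_univ u)]
  rw [split1, split2, e2, Finset.sum_add_distrib, e3, e4, hdu, hdv, hsym v u]
  ring

lemma mem_Lam {x : Fin d → ℤ} : x ∈ Lam d n ↔ ∀ m, -(n:ℤ) ≤ x m ∧ x m ≤ n := by
  unfold Lam
  rw [Finset.mem_Icc]
  constructor
  · intro ⟨h1, h2⟩ m; exact ⟨h1 m, h2 m⟩
  · intro hm; exact ⟨fun m => (hm m).1, fun m => (hm m).2⟩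

lemma nbrs_in_Lam (hn : 2 ≤ n) {x : Fin d → ℤ} (hx : ∀ m, |x m| ≤ 1) :
    ∀ y, Nbr x y → y ∈ Lam d n := by
  intro y hy
  rw [mem_Lam]
  intro m
  have h1 := hx m
  have h2 := nbr_abs_le hy m
  have := abs_le.mp h1
  have := abs_le.mp h2
  constructor <;> [nlinarith [this.1]; nlinarith]

/-- an interior site: all its neighbors are in `Λ`, so `nOut = 0`. -/
lemma nOut_eq_zero {x : Site d n} (hsub : ∀ y, Nbr x.1 y → y ∈ Lam d n) :
    nOut x = 0 := by
  unfold nOut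
  have : (Lam d n).filter (fun j => Nbr x.1 j) = nbrFinset x.1 := by
    ext y
    rw [Finset.mem_filter, mem_nbrFinset]
    exact ⟨fun hh => hh.2, fun hh => ⟨hsub y hh, hh⟩⟩
  rw [this, card_nbrFinset]
  push_cast
  ring

/-- counting sum for the special sites -/
lemma count_sum (hd : 1 ≤ d) (u v : Site d n)
    (hsub : ∀ y, Nbr u.1 y → y ∈ Lam d n) (hNuv : Nbr u.1 v.1) :
    ∑ j : Site d n, (if Nbr u.1 j.1 ∧ j.1 ≠ v.1 then (1:ℝ)/2 else 0)
      = (2*(d:ℝ) - 1)/2 := by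
  classical
  have e0 : ∑ j : Site d n, (if Nbr u.1 j.1 ∧ j.1 ≠ v.1 then (1:ℝ)/2 else 0)
      = ∑ x ∈ Lam d n, (if Nbr u.1 x ∧ x ≠ v.1 then (1:ℝ)/2 else 0) := by
    rw [Finset.univ_eq_attach, ← Finset.sum_attach (Lam d n)
      (fun x => if Nbr u.1 x ∧ x ≠ v.1 then (1:ℝ)/2 else 0)]
  rw [e0, ← Finset.sum_filter]
  have efil : (Lam d n).filter (fun x => Nbr u.1 x ∧ x ≠ v.1)
      = (nbrFinset u.1).erase v.1 := by
    ext y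
    rw [Finset.mem_filter, Finset.mem_erase, mem_nbrFinset]
    constructor
    · rintro ⟨_, h1, h2⟩; exact ⟨h2, h1⟩
    · rintro ⟨h2, h1⟩; exact ⟨hsub y h1, h1, h2⟩
  rw [efil, Finset.sum_const, Finset.card_erase_of_mem (mem_nbrFinset.mpr hNuv),
    card_nbrFinset, nsmul_eq_mul]
  have h1 : (1:ℕ) ≤ 2 * d := by omega
  push_cast [h1]
  ring

end SSEP
namespace SSEP

variable {d n : ℕ}

lemma case1_sum {C : ℝ} {h : (Fin d → ℤ) → ℝ} (hC : 0 < C)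
    (h01 : ∀ i, h i ∈ Set.Icc (0:ℝ) 1) (hout : ∀ i ∉ Lam d n, h i = 0)
    (k : Site d n) (hharmk : 2 * (d:ℝ) * h k.1 = ∑ j ∈ nbrFinset k.1, h j) :
    ∑ j : Site d n, (if Nbr k.1 j.1 then (1 - (1 + C*h j.1)/(1 + C*h k.1)) else 0)
      = (nOut k : ℝ) * (1/(1 + C*h k.1) - 1) := by
  classical
  have hak : (0:ℝ) < 1 + C * h k.1 := A_pos hC h01 k.1
  set s : Finset (Fin d → ℤ) := (Lam d n).filter (fun x => Nbr k.1 x) with hs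
  set N : ℕ := s.card with hN
  -- reduce the subtype sum to a sum over the filter
  have e0 : ∑ j : Site d n, (if Nbr k.1 j.1 then (1 - (1 + C*h j.1)/(1 + C*h k.1)) else 0)
      = ∑ x ∈ s, (1 - (1 + C*h x)/(1 + C*h k.1)) := by
    rw [Finset.univ_eq_attach, Finset.sum_attach (Lam d n)
      (fun x => if Nbr k.1 x then (1 - (1 + C*h x)/(1 + C*h k.1)) else 0), hs,
      Finset.sum_filter]
  -- split the neighbors into those inside and outside Λ
  have efil : (nbrFinset k.1).filter (fun x => x ∈ Lam d n) = s := by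
    ext y
    rw [Finset.mem_filter, mem_nbrFinset, hs, Finset.mem_filter]
    tauto
  have hcards : N + ((nbrFinset k.1).filter (fun x => x ∉ Lam d n)).card = 2 * d := by
    rw [hN, ← efil, Finset.card_filter_add_card_filter_not, card_nbrFinset]
  have eout : ∑ x ∈ (nbrFinset k.1).filter (fun x => x ∉ Lam d n), (1 + C*h x)
      = (((nbrFinset k.1).filter (fun x => x ∉ Lam d n)).card : ℝ) := by
    rw [Finset.sum_congr rfl (fun x hx => show (1:ℝ) + C * h x = 1 by
      rw [hout x (Finset.mem_filter.mp hx).2]; ring), Finset.sum_const, nsmul_eq_mul, mul_one]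
  have e3 : ∑ x ∈ nbrFinset k.1, (1 + C*h x) = 2 * (d:ℝ) * (1 + C * h k.1) := by
    rw [Finset.sum_add_distrib, Finset.sum_const, ← Finset.mul_sum, ← hharmk,
      card_nbrFinset, nsmul_eq_mul]
    push_cast
    ring
  have e2 : ∑ x ∈ s, (1 + C*h x)
      = 2 * (d:ℝ) * (1 + C * h k.1) - (2 * (d:ℝ) - N) := by
    have := Finset.sum_filter_add_sum_filter_not (nbrFinset k.1) (fun x => x ∈ Lam d n)
      (fun x => 1 + C*h x)
    rw [efil, eout] at this
    have hcast : (((nbrFinset k.1).filter (fun x => x ∉ Lam d n)).card : ℝ)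
        = 2 * (d:ℝ) - N := by
      have h2 : ((nbrFinset k.1).filter (fun x => x ∉ Lam d n)).card = 2 * d - N := by omega
      rw [h2]
      have h3 : N ≤ 2 * d := by omega
      push_cast [h3]
      ring
    rw [hcast] at this
    linarith [e3, this]
  have e1 : ∑ x ∈ s, (1 - (1 + C*h x)/(1 + C*h k.1))
      = (N:ℝ) - (∑ x ∈ s, (1 + C*h x))/(1 + C*h k.1) := by
    rw [Finset.sum_sub_distrib, Finset.sum_const, ← Finset.sum_div, nsmul_eq_mul, mul_one]
  have enout : (nOut k : ℝ) = 2 * (d:ℝ) - N := by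
    unfold nOut
    rw [← hs, ← hN]
    push_cast
    ring
  rw [e0, e1, e2, enout]
  field_simp
  ring

end SSEP
namespace SSEP

variable {d n : ℕ}

lemma exch_apply_of_ne {i j x : Site d n} (hxi : x ≠ i) (hxj : x ≠ j) (η : Conf d n) :
    exch i j η x = η x := by
  unfold exch
  rw [if_neg hxi, if_neg hxj]

lemma exch_apply_left {i j : Site d n} (η : Conf d n) : exch i j η i = η j := by
  unfold exch
  rw [if_pos rfl]

lemma exch_apply_right {i j : Site d n} (η : Conf d n) : exch i j η j = η i := by
  unfold exch
  split_ifs with h1 h2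
  · rw [h1]
  · rfl
  · exact absurd rfl h2

lemma flp_apply_ne {i x : Site d n} (hxi : x ≠ i) (η : Conf d n) : flp i η x = η x := by
  unfold flp
  rw [if_neg hxi]

lemma site0_val : (site0 d n).1 = 0 := rfl

lemma tEx_comm (C : ℝ) (h : (Fin d → ℤ) → ℝ) (z' : Site d n) (i j : Site d n)
    (η : Conf d n) : tEx C h z' i j η = tEx C h z' j i η := by
  unfold tEx
  rw [exch_comm]

lemma exch_update_comm {i j k : Site d n} (hik : k ≠ i) (hjk : k ≠ j) (η : Conf d n)
    (c : Bool) :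
    exch i j (Function.update η k c) = Function.update (exch i j η) k c := by
  funext x
  by_cases hx : x = k
  · subst hx
    rw [Function.update_self]
    unfold exch
    rw [if_neg hik, if_neg hjk, Function.update_self]
  · rw [Function.update_of_ne hx]
    unfold exch
    split_ifs with h1 h2
    · exact Function.update_of_ne (Ne.symm hjk) _ _
    · exact Function.update_of_ne (Ne.symm hik) _ _
    · exact Function.update_of_ne hx _ _

lemma flp_update_comm {i k : Site d n} (hik : k ≠ i) (η : Conf d n) (c : Bool) :
    flp i (Function.update η k c) = Function.update (flp i η) k c := by
  funext x
  by_cases hx : x = k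
  · subst hx
    rw [Function.update_self]
    unfold flp
    rw [if_neg hik, Function.update_self]
  · rw [Function.update_of_ne hx]
    unfold flp
    split_ifs with h1
    · subst h1
      rw [Function.update_of_ne hx]
    · exact Function.update_of_ne hx _ _

lemma indA_update_ne {z' k : Site d n} (hk0 : k ≠ site0 d n) (hkz : k ≠ z')
    (σ : Conf d n) (c : Bool) :
    indA z' (Function.update σ k c) = indA z' σ := by
  unfold indA
  rw [Function.update_of_ne (Ne.symm hk0), Function.update_of_ne (Ne.symm hkz)]

/-- invariance of exchange terms under updating an uninvolved site (provided the
killing indicator does not change). -/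
lemma tEx_update_ne {C : ℝ} {h : (Fin d → ℤ) → ℝ} {z' : Site d n}
    (hC : 0 < C) (h01 : ∀ i, h i ∈ Set.Icc (0:ℝ) 1)
    {i j k : Site d n} (hik : k ≠ i) (hjk : k ≠ j) {η : Conf d n} (hk : η k = false)
    (hind : indA z' (Function.update (exch i j η) k true) = indA z' (exch i j η)) :
    tEx C h z' i j (Function.update η k true) = tEx C h z' i j η := by
  have hc := exch_update_comm hik hjk η true
  have hσk : (exch i j η) k = false := by rw [exch_apply_of_ne hik hjk]; exact hk
  have hP1 : Pf C h (Function.update (exch i j η) k true)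
      = wv C h k true * Pf C h (exch i j η) := by
    have := Pf_update (C := C) (h := h) (exch i j η) k true
    rw [hσk] at this
    simpa [wv] using this
  have hP2 : Pf C h (Function.update η k true) = wv C h k true * Pf C h η := by
    have := Pf_update (C := C) (h := h) η k true
    rw [hk] at this
    simpa [wv] using this
  unfold tEx
  rw [psiTwo_eq, psiTwo_eq, hc, hind, hP1, hP2]
  have hw : wv C h k true ≠ 0 := ne_of_gt (wv_pos hC h01 k true)
  have hPη : Pf C h η ≠ 0 := ne_of_gt (Pf_pos hC h01 η)
  congr 1
  field_simp

/-- the exchange term of the special bond `(0,0')` vanishes off `A₂`. -/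
lemma tEx_bond_zero {C : ℝ} {h : (Fin d → ℤ) → ℝ} {z' : Site d n}
    (hC : 0 < C) (h01 : ∀ i, h i ∈ Set.Icc (0:ℝ) 1)
    (hz' : Nbr (0 : Fin d → ℤ) z'.1) (h0 : h 0 = 1) (h0' : h z'.1 = 1)
    {σ : Conf d n} (hA : ¬(σ (site0 d n) = true ∧ σ z' = true)) :
    tEx C h z' (site0 d n) z' σ = 0 := by
  have hPσ : Pf C h σ ≠ 0 := ne_of_gt (Pf_pos hC h01 σ)
  have huv : site0 d n ≠ z' := by
    intro he
    exact nbr_ne hz' (by rw [← he]; rfl)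
  by_cases hs : σ (site0 d n) = σ z'
  · exact tEx_same hPσ hs hA
  · rw [tEx_eval hC h01 huv]
    have hind : indA z' (exch (site0 d n) z' σ) = 1 := by
      apply indA_eq_one
      rw [exch_apply_left, exch_apply_right]
      intro ⟨ha, hb⟩
      exact hA ⟨hb, ha⟩
    have hg : gam C h (site0 d n).1 = gam C h z'.1 := by
      rw [site0_val]
      unfold gam
      rw [h0, h0']
    have hwpos := wv_pos (n := n) hC h01
    rcases Bool.eq_false_or_eq_true (σ (site0 d n)) with h1 | h1 <;>
      rcases Bool.eq_false_or_eq_true (σ z') with h2 | h2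
    · exact absurd (h1.trans h2.symm) hs
    · rw [hind, h1, h2]
      unfold wv
      simp only [if_pos, if_neg]
      rw [hg]
      have : gam C h z'.1 ≠ 0 := ne_of_gt (gam_pos hC h01 z'.1)
      field_simp
      norm_num
    · rw [hind, h1, h2]
      unfold wv
      simp only [if_pos, if_neg]
      rw [hg]
      have : gam C h z'.1 ≠ 0 := ne_of_gt (gam_pos hC h01 z'.1)
      field_simp
      norm_num
    · exact absurd (h1.trans h2.symm) hs

end SSEP
namespace SSEP

variable {d n : ℕ} {ρ β C : ℝ} {h : (Fin d → ℤ) → ℝ} {z' : Site d n}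

lemma wv_true (k : Site d n) : wv C h k true = gam C h k.1 := rfl
lemma wv_false (k : Site d n) : wv C h k false = 1 := rfl

lemma sum_diff_single {α : Type*} [Fintype α] [DecidableEq α] (f g : α → ℝ) (k : α)
    (hfg : ∀ i, i ≠ k → f i = g i) : (∑ i, f i) - (∑ i, g i) = f k - g k := by
  rw [← Finset.sum_erase_add _ f (Finset.mem_univ k),
    ← Finset.sum_erase_add _ g (Finset.mem_univ k),
    Finset.sum_congr rfl (fun i hi => hfg i (Finset.ne_of_mem_erase hi))]
  ring

lemma Wf_sub (η ξ : Conf d n) :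
    Wf ρ β C h z' ξ - Wf ρ β C h z' η =
      (∑ i : Site d n, ∑ j : Site d n,
        (if Nbr i.1 j.1 then tEx C h z' i j ξ - tEx C h z' i j η else 0)) / 2
      + ((∑ i : Site d n, (nOut i : ℝ) * bdRate ρ ξ i * tFl C h z' i ξ)
          - ∑ i : Site d n, (nOut i : ℝ) * bdRate ρ η i * tFl C h z' i η)
      + (β - 1) * (tEx C h z' (site0 d n) z' ξ - tEx C h z' (site0 d n) z' η) := by
  unfold Wf
  have e : (∑ i : Site d n, ∑ j : Site d n, if Nbr i.1 j.1 then tEx C h z' i j ξ else 0)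
      - (∑ i : Site d n, ∑ j : Site d n, if Nbr i.1 j.1 then tEx C h z' i j η else 0)
      = ∑ i : Site d n, ∑ j : Site d n,
          (if Nbr i.1 j.1 then tEx C h z' i j ξ - tEx C h z' i j η else 0) := by
    rw [← Finset.sum_sub_distrib]
    refine Finset.sum_congr rfl fun i _ => ?_
    rw [← Finset.sum_sub_distrib]
    refine Finset.sum_congr rfl fun j _ => ?_
    split_ifs
    · rfl
    · ring
  rw [← e]
  ring

lemma F_symm (η ξ : Conf d n) (i j : Site d n) :
    (if Nbr i.1 j.1 then tEx C h z' i j ξ - tEx C h z' i j η else 0)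
      = (if Nbr j.1 i.1 then tEx C h z' j i ξ - tEx C h z' j i η else 0) := by
  by_cases hN : Nbr i.1 j.1
  · rw [if_pos hN, if_pos (nbr_symm hN), tEx_comm C h z' i j ξ, tEx_comm C h z' i j η]
  · rw [if_neg hN, if_neg (fun hc => hN (nbr_symm hc))]

lemma tFl_update_ne (hC : 0 < C) (h01 : ∀ i, h i ∈ Set.Icc (0:ℝ) 1)
    {i k : Site d n} (hik : k ≠ i) {η : Conf d n} (hk : η k = false)
    (hind : indA z' (Function.update (flp i η) k true) = indA z' (flp i η)) :
    tFl C h z' i (Function.update η k true) = tFl C h z' i η := by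
  have hc := flp_update_comm hik η true
  have hσk : (flp i η) k = false := by rw [flp_apply_ne hik]; exact hk
  have hP1 : Pf C h (Function.update (flp i η) k true)
      = wv C h k true * Pf C h (flp i η) := by
    have := Pf_update (C := C) (h := h) (flp i η) k true
    rw [hσk] at this
    simpa [wv] using this
  have hP2 : Pf C h (Function.update η k true) = wv C h k true * Pf C h η := by
    have := Pf_update (C := C) (h := h) η k true
    rw [hk] at this
    simpa [wv] using this
  unfold tFl
  rw [psiTwo_eq, psiTwo_eq, hc, hind, hP1, hP2]
  have hw : wv C h k true ≠ 0 := ne_of_gt (wv_pos hC h01 k true)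
  have hPη : Pf C h η ≠ 0 := ne_of_gt (Pf_pos hC h01 η)
  congr 1
  field_simp

lemma nOut_cast_nonneg (k : Site d n) : 0 ≤ (nOut k : ℝ) := by
  have h1 : ((Lam d n).filter (fun j => Nbr k.1 j)).card ≤ 2 * d := by
    rw [← card_nbrFinset k.1]
    exact Finset.card_le_card (fun x hx => mem_nbrFinset.mpr (Finset.mem_filter.mp hx).2)
  unfold nOut
  push_cast
  have := (Nat.cast_le (α := ℝ)).mpr h1
  push_cast at this
  linarith

/-- per-bond estimate at a generic site `k` -/
lemma case1_bond (hC : 0 < C) (h01 : ∀ i, h i ∈ Set.Icc (0:ℝ) 1)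
    (h0 : h 0 = 1) (h0' : h z'.1 = 1)
    (hC2 : ∀ x : Fin d → ℤ, x ≠ 0 → x ≠ z'.1 →
      (Nbr (0 : Fin d → ℤ) x ∨ Nbr z'.1 x) → 2 * (1 + C * h x) ≤ 1 + C)
    {η : Conf d n} {k : Site d n} (hk : η k = false)
    (hk0 : k ≠ site0 d n) (hkz : k ≠ z')
    (hη : ¬(η (site0 d n) = true ∧ η z' = true))
    (hξ : ¬((Function.update η k true) (site0 d n) = true ∧
        (Function.update η k true) z' = true))
    (j : Site d n) (hN : Nbr k.1 j.1) :
    1 - (1 + C * h j.1) / (1 + C * h k.1)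
      ≤ tEx C h z' k j (Function.update η k true) - tEx C h z' k j η := by
  have hkj : k ≠ j := fun hc => nbr_ne hN (congrArg Subtype.val hc)
  have hak : (0:ℝ) < 1 + C * h k.1 := A_pos hC h01 k.1
  have haj : (0:ℝ) < 1 + C * h j.1 := A_pos hC h01 j.1
  have hPη : Pf C h η ≠ 0 := ne_of_gt (Pf_pos hC h01 η)
  have hPξ : Pf C h (Function.update η k true) ≠ 0 :=
    ne_of_gt (Pf_pos hC h01 _)
  have hξk : (Function.update η k true) k = true := Function.update_self k true η
  have hξj : (Function.update η k true) j = η j := Function.update_of_ne (Ne.symm hkj) true η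
  have hk0' : k.1 ≠ 0 := fun hc => hk0 (Subtype.ext (hc.trans site0_val.symm))
  have hkz' : k.1 ≠ z'.1 := fun hc => hkz (Subtype.ext hc)
  by_cases hj : η j = true
  · -- the particle at j moves to k; the difference is exactly the bound
    have h1 : tEx C h z' k j (Function.update η k true) = 0 :=
      tEx_same hPξ (by rw [hξk, hξj, hj]) hξ
    have h2 : tEx C h z' k j η = (1 + C * h j.1) / (1 + C * h k.1) - 1 := by
      rw [tEx_eval hC h01 hkj]
      have hind : indA z' (exch k j η) = 1 := by
        apply indA_eq_one
        rintro ⟨c1, c2⟩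
        by_cases hju : site0 d n = j
        · have : exch k j η (site0 d n) = η k := by rw [hju]; exact exch_apply_right η
          rw [this, hk] at c1
          exact Bool.false_ne_true c1
        · by_cases hjz : z' = j
          · have : exch k j η z' = η k := by rw [hjz]; exact exch_apply_right η
            rw [this, hk] at c2
            exact Bool.false_ne_true c2
          · have e1 : exch k j η (site0 d n) = η (site0 d n) :=
              exch_apply_of_ne (Ne.symm hk0) hju η
            have e2 : exch k j η z' = η z' := exch_apply_of_ne (Ne.symm hkz) hjz η
            exact hη ⟨e1 ▸ c1, e2 ▸ c2⟩
      rw [hind, hk, hj, wv_true, wv_false, wv_true, wv_false, gam_eq, gam_eq]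
      field_simp
    rw [h1, h2]
    linarith
  · have hjf : η j = false := by revert hj; cases η j <;> simp
    have h2 : tEx C h z' k j η = 0 := tEx_same hPη (hk.trans hjf.symm) hη
    by_cases hkill : exch k j (Function.update η k true) (site0 d n) = true ∧
        exch k j (Function.update η k true) z' = true
    · -- the move kills the configuration
      have hind : indA z' (exch k j (Function.update η k true)) = 0 := if_pos hkill
      have hstep : 2 * (1 + C * h k.1) ≤ 1 + C * h j.1 := by
        by_cases hju : site0 d n = j
        · have hjval : j.1 = 0 := by rw [← hju]; rfl
          have := hC2 k.1 hk0' hkz' (Or.inl (nbr_symm (by rw [← hjval]; exact hN)))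
          rw [hjval, h0]
          linarith
        · by_cases hjz : z' = j
          · have hjval : j.1 = z'.1 := by rw [← hjz]
            have := hC2 k.1 hk0' hkz' (Or.inr (nbr_symm (by rw [← hjval]; exact hN)))
            rw [hjval, h0']
            linarith
          · exfalso
            have e1 : exch k j (Function.update η k true) (site0 d n)
                = η (site0 d n) := by
              rw [exch_apply_of_ne (Ne.symm hk0) hju, Function.update_of_ne (Ne.symm hk0)]
            have e2 : exch k j (Function.update η k true) z' = η z' := by
              rw [exch_apply_of_ne (Ne.symm hkz) hjz, Function.update_of_ne (Ne.symm hkz)]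
            exact hη ⟨e1 ▸ hkill.1, e2 ▸ hkill.2⟩
      rw [tEx_eval hC h01 hkj, hind, h2, zero_mul, zero_div]
      have hdiv : 2 ≤ (1 + C * h j.1) / (1 + C * h k.1) :=
        (le_div_iff₀ hak).mpr (by linarith)
      linarith
    · have hind : indA z' (exch k j (Function.update η k true)) = 1 := if_neg hkill
      rw [tEx_eval hC h01 hkj, hind, h2, hξk, hξj, hjf, wv_false, wv_true, wv_true,
        wv_false, gam_eq, gam_eq]
      have hr := ratio2 haj hak
      have e3 : (1:ℝ) * (1 * (1 + C * h j.1)⁻¹) / ((1 + C * h k.1)⁻¹ * 1)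
          = (1 + C * h k.1) / (1 + C * h j.1) := by
        field_simp
      rw [e3]
      linarith
  
end SSEP
namespace SSEP

variable {d n : ℕ} {ρ β C : ℝ} {h : (Fin d → ℤ) → ℝ} {z' : Site d n}

lemma kap_pos (hρ : ρ ∈ Set.Ioo (0:ℝ) 1) : 0 < kap ρ :=
  Real.sqrt_pos.mpr (div_pos (by linarith [hρ.2]) hρ.1)

lemma bdRate_false {η : Conf d n} {k : Site d n} (hk : η k = false) :
    bdRate ρ η k = (kap ρ)⁻¹ := by
  unfold bdRate
  rw [hk]
  norm_num

lemma bdRate_true {η : Conf d n} {k : Site d n} (hk : η k = true) :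
    bdRate ρ η k = kap ρ := by
  unfold bdRate
  rw [hk]
  norm_num

lemma step_case1 (hρ : ρ ∈ Set.Ioo (0:ℝ) 1)
    (hz' : Nbr (0 : Fin d → ℤ) z'.1)
    (h01 : ∀ i, h i ∈ Set.Icc (0:ℝ) 1) (h0 : h 0 = 1) (h0' : h z'.1 = 1)
    (hout : ∀ i ∉ Lam d n, h i = 0)
    (hharm : ∀ i ∈ Lam d n, i ≠ 0 → i ≠ z'.1 →
      2 * (d : ℝ) * h i = ∑ j ∈ nbrFinset i, h j)
    (hC : 0 < C)
    (hC2 : ∀ x : Fin d → ℤ, x ≠ 0 → x ≠ z'.1 →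
      (Nbr (0 : Fin d → ℤ) x ∨ Nbr z'.1 x) → 2 * (1 + C * h x) ≤ 1 + C)
    {η : Conf d n} {k : Site d n} (hk : η k = false)
    (hk0 : k ≠ site0 d n) (hkz : k ≠ z')
    (hη : ¬(η (site0 d n) = true ∧ η z' = true))
    (hξA : ¬((Function.update η k true) (site0 d n) = true ∧
        (Function.update η k true) z' = true)) :
    Wf ρ β C h z' η ≤ Wf ρ β C h z' (Function.update η k true) := by
  have hak : (0:ℝ) < 1 + C * h k.1 := A_pos hC h01 k.1
  have h1k : (1:ℝ) ≤ 1 + C * h k.1 := by nlinarith [(h01 k.1).1]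
  have hκ : 0 < kap ρ := kap_pos hρ
  have hk0' : k.1 ≠ 0 := fun hc => hk0 (Subtype.ext (hc.trans site0_val.symm))
  have hkz' : k.1 ≠ z'.1 := fun hc => hkz (Subtype.ext hc)
  have hPη : Pf C h η ≠ 0 := ne_of_gt (Pf_pos hC h01 η)
  rw [← sub_nonneg, Wf_sub]
  -- the β-term vanishes
  have hb : tEx C h z' (site0 d n) z' (Function.update η k true)
      - tEx C h z' (site0 d n) z' η = 0 := by
    rw [tEx_bond_zero hC h01 hz' h0 h0' hξA, tEx_bond_zero hC h01 hz' h0 h0' hη, sub_self]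
  -- boundary difference
  have hflpη : flp k η = Function.update η k true := by
    rw [flp_eq_update, hk, Bool.not_false]
  have hflpξ : flp k (Function.update η k true) = η := by
    rw [flp_eq_update, Function.update_self]
    funext x
    by_cases hx : x = k
    · subst hx
      rw [Function.update_self, hk]
      rfl
    · rw [Function.update_of_ne hx, Function.update_of_ne hx]
  have hPfξ : Pf C h (Function.update η k true) = gam C h k.1 * Pf C h η := by
    have := Pf_update (C := C) (h := h) η k true
    rw [hk, wv_false, wv_true, mul_one] at this
    exact this
  have hgk : gam C h k.1 ≠ 0 := ne_of_gt (gam_pos hC h01 k.1)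
  have htFlη : tFl C h z' k η = (1 + C * h k.1)⁻¹ - 1 := by
    unfold tFl
    rw [hflpη, psiTwo_eq_Pf hξA, hPfξ, mul_div_assoc, div_self hPη, mul_one, gam_eq]
  have htFlξ : tFl C h z' k (Function.update η k true) = (1 + C * h k.1) - 1 := by
    unfold tFl
    rw [hflpξ, psiTwo_eq_Pf hη, hPfξ]
    rw [show Pf C h η / (gam C h k.1 * Pf C h η) = (gam C h k.1)⁻¹ by
      rw [eq_comm, inv_eq_one_div, div_eq_div_iff hgk (mul_ne_zero hgk hPη)]
      ring]
    rw [gam_eq, inv_inv]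
  have hbd : (∑ i : Site d n, (nOut i : ℝ) * bdRate ρ (Function.update η k true) i
        * tFl C h z' i (Function.update η k true))
      - (∑ i : Site d n, (nOut i : ℝ) * bdRate ρ η i * tFl C h z' i η)
      = (nOut k : ℝ) * kap ρ * ((1 + C * h k.1) - 1)
        - (nOut k : ℝ) * (kap ρ)⁻¹ * ((1 + C * h k.1)⁻¹ - 1) := by
    rw [sum_diff_single _ _ k (fun i hik => ?_)]
    · rw [bdRate_true (Function.update_self k true η), bdRate_false hk, htFlη, htFlξ]
    · have h1 : bdRate ρ (Function.update η k true) i = bdRate ρ η i := by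
        unfold bdRate
        rw [Function.update_of_ne hik]
      have h2 : tFl C h z' i (Function.update η k true) = tFl C h z' i η :=
        tFl_update_ne hC h01 (fun hc => hik (hc.symm)) hk
          (indA_update_ne hk0 hkz _ _)
      rw [h1, h2]
  -- exchange double sum
  have hdsum : (∑ i : Site d n, ∑ j : Site d n,
        (if Nbr i.1 j.1 then tEx C h z' i j (Function.update η k true)
          - tEx C h z' i j η else 0))
      = 2 * ∑ j : Site d n, (if Nbr k.1 j.1
          then tEx C h z' k j (Function.update η k true) - tEx C h z' k j η else 0) := by
    apply dsum_single
    · exact fun i j => F_symm η (Function.update η k true) i j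
    · rw [if_neg (nbr_irrefl k.1)]
    · intro i j hik hjk
      by_cases hN : Nbr i.1 j.1
      · rw [if_pos hN, tEx_update_ne hC h01 (Ne.symm hik) (Ne.symm hjk) hk
          (indA_update_ne hk0 hkz _ _), sub_self]
      · rw [if_neg hN]
  have hlow : ∀ j : Site d n,
      (if Nbr k.1 j.1 then (1 - (1 + C * h j.1) / (1 + C * h k.1)) else 0)
        ≤ (if Nbr k.1 j.1 then tEx C h z' k j (Function.update η k true)
            - tEx C h z' k j η else 0) := by
    intro j
    by_cases hN : Nbr k.1 j.1
    · rw [if_pos hN, if_pos hN]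
      exact case1_bond hC h01 h0 h0' hC2 hk hk0 hkz hη hξA j hN
    · rw [if_neg hN, if_neg hN]
  have hsum := Finset.sum_le_sum (s := (Finset.univ : Finset (Site d n))) (fun j _ => hlow j)
  rw [case1_sum hC h01 hout k (hharm k.1 k.2 hk0' hkz')] at hsum
  rw [hdsum, hbd, hb, mul_zero, add_zero]
  rw [show ∀ x : ℝ, 2 * x / 2 = x from fun x => by ring]
  -- final arithmetic
  have hnn : 0 ≤ (nOut k : ℝ) := nOut_cast_nonneg k
  have ht0 : 1 - (1 + C * h k.1)⁻¹ ≤ (1 + C * h k.1) - 1 := by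
    have := ratio2 one_pos hak
    rw [div_one, one_div] at this
    linarith
  have htnn : 0 ≤ 1 - (1 + C * h k.1)⁻¹ := by
    have h2 : (1 + C * h k.1) * (1 + C * h k.1)⁻¹ = 1 := mul_inv_cancel₀ (ne_of_gt hak)
    have h3 : 0 < (1 + C * h k.1)⁻¹ := inv_pos.mpr hak
    nlinarith
  have key : 0 ≤ (nOut k : ℝ) * (1 / (1 + C * h k.1) - 1)
      + ((nOut k : ℝ) * kap ρ * ((1 + C * h k.1) - 1)
        - (nOut k : ℝ) * (kap ρ)⁻¹ * ((1 + C * h k.1)⁻¹ - 1)) := by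
    rw [one_div]
    have inner : 0 ≤ ((1 + C * h k.1)⁻¹ - 1) + (kap ρ * ((1 + C * h k.1) - 1)
        - (kap ρ)⁻¹ * ((1 + C * h k.1)⁻¹ - 1)) := by
      rcases le_or_gt 1 (kap ρ) with hκ1 | hκ1
      · have e1 : (1 + C * h k.1) - 1 ≤ kap ρ * ((1 + C * h k.1) - 1) := by
          nlinarith
        have e2 : 0 ≤ (kap ρ)⁻¹ * (1 - (1 + C * h k.1)⁻¹) :=
          mul_nonneg (inv_nonneg.mpr hκ.le) htnn
        nlinarith
      · have hκinv : 1 ≤ (kap ρ)⁻¹ := by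
          have hmi := mul_inv_cancel₀ (ne_of_gt hκ)
          have hip : 0 < (kap ρ)⁻¹ := inv_pos.mpr hκ
          nlinarith
        have e3 : 0 ≤ ((kap ρ)⁻¹ - 1) * (1 - (1 + C * h k.1)⁻¹) :=
          mul_nonneg (by linarith) htnn
        have e4 : 0 ≤ kap ρ * ((1 + C * h k.1) - 1) :=
          mul_nonneg hκ.le (by linarith)
        nlinarith
    nlinarith [mul_nonneg hnn inner]
  linarith [hsum, key]

end SSEP
namespace SSEP

variable {d n : ℕ} {ρ β C : ℝ} {h : (Fin d → ℤ) → ℝ} {z' : Site d n}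

lemma step_case2 (hd : 1 ≤ d) (hρ : ρ ∈ Set.Ioo (0:ℝ) 1)
    (hz' : Nbr (0 : Fin d → ℤ) z'.1)
    (h01 : ∀ i, h i ∈ Set.Icc (0:ℝ) 1) (h0 : h 0 = 1) (h0' : h z'.1 = 1)
    (hC : 0 < C)
    {u v : Site d n} (huv : u ≠ v) (hNuv : Nbr u.1 v.1)
    (hAiff : ∀ σ : Conf d n,
      ((σ (site0 d n) = true ∧ σ z' = true) ↔ (σ u = true ∧ σ v = true)))
    (hhu : h u.1 = 1) (hhv : h v.1 = 1)
    (hsubu : ∀ y, Nbr u.1 y → y ∈ Lam d n) (hsubv : ∀ y, Nbr v.1 y → y ∈ Lam d n)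
    (hC2' : ∀ j : Site d n, j ≠ u → j ≠ v → (Nbr u.1 j.1 ∨ Nbr v.1 j.1) →
      2 * (1 + C * h j.1) ≤ 1 + C)
    (ht0 : ∀ σ : Conf d n, ¬(σ (site0 d n) = true ∧ σ z' = true) →
      tEx C h z' u v σ = 0)
    {η : Conf d n} (hk : η u = false)
    (hη : ¬(η (site0 d n) = true ∧ η z' = true))
    (hξA : ¬((Function.update η u true) (site0 d n) = true ∧
        (Function.update η u true) z' = true)) :
    Wf ρ β C h z' η ≤ Wf ρ β C h z' (Function.update η u true) := by
  have hvu : v ≠ u := Ne.symm huv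
  have hCp : (0:ℝ) < 1 + C := by linarith
  have hPη : Pf C h η ≠ 0 := ne_of_gt (Pf_pos hC h01 η)
  have hPξ : Pf C h (Function.update η u true) ≠ 0 := ne_of_gt (Pf_pos hC h01 _)
  have hξu : (Function.update η u true) u = true := Function.update_self u true η
  have hξv : (Function.update η u true) v = η v := Function.update_of_ne hvu true η
  -- the other special site is empty
  have hηv : η v = false := by
    by_contra hc
    have hc' : η v = true := by revert hc; cases η v <;> simp
    exact hξA ((hAiff _).mpr ⟨hξu, hξv.trans hc'⟩)
  have hindA : ∀ σ : Conf d n, (σ u = false ∨ σ v = false) → indA z' σ = 1 := by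
    intro σ hor
    apply indA_eq_one
    intro hcc
    have h2 := (hAiff σ).mp hcc
    rcases hor with h3 | h3
    · rw [h2.1] at h3; simp at h3
    · rw [h2.2] at h3; simp at h3
  have hindA0 : ∀ σ : Conf d n, σ u = true → σ v = true → indA z' σ = 0 :=
    fun σ h1 h2 => if_pos ((hAiff σ).mpr ⟨h1, h2⟩)
  have hgu : gam C h u.1 = (1 + C)⁻¹ := by rw [gam_eq, hhu, mul_one]
  have hgv : gam C h v.1 = (1 + C)⁻¹ := by rw [gam_eq, hhv, mul_one]
  have hnu : (nOut u : ℝ) = 0 := by rw [nOut_eq_zero hsubu]; norm_num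
  have hnv : (nOut v : ℝ) = 0 := by rw [nOut_eq_zero hsubv]; norm_num
  rw [← sub_nonneg, Wf_sub]
  -- the β-term vanishes
  have hb : tEx C h z' (site0 d n) z' (Function.update η u true)
      - tEx C h z' (site0 d n) z' η = 0 := by
    rw [tEx_bond_zero hC h01 hz' h0 h0' hξA, tEx_bond_zero hC h01 hz' h0 h0' hη, sub_self]
  -- the boundary sums agree termwise
  have hbd : (∑ i : Site d n, (nOut i : ℝ) * bdRate ρ (Function.update η u true) i
        * tFl C h z' i (Function.update η u true))
      - (∑ i : Site d n, (nOut i : ℝ) * bdRate ρ η i * tFl C h z' i η) = 0 := by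
    rw [Finset.sum_congr rfl (fun i _ => ?_), sub_self]
    by_cases hiu : i = u
    · subst hiu; rw [hnu, zero_mul, zero_mul, zero_mul, zero_mul]
    · by_cases hiv : i = v
      · subst hiv; rw [hnv, zero_mul, zero_mul, zero_mul, zero_mul]
      · have h1 : bdRate ρ (Function.update η u true) i = bdRate ρ η i := by
          unfold bdRate
          rw [Function.update_of_ne hiu]
        have hui : u ≠ i := fun hc => hiu hc.symm
        have h2 : tFl C h z' i (Function.update η u true) = tFl C h z' i η := by
          refine tFl_update_ne hC h01 hui hk ?_
          have e1 : (Function.update (flp i η) u true) v = η v := by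
            rw [Function.update_of_ne hvu, flp_apply_ne (fun hc => hiv hc.symm)]
          have e2 : (flp i η) u = η u := flp_apply_ne hui _
          rw [hindA _ (Or.inr (e1.trans hηv)), hindA _ (Or.inl (e2.trans hk))]
        rw [h1, h2]
  -- the exchange double sum
  have hFuv : (if Nbr u.1 v.1 then tEx C h z' u v (Function.update η u true)
      - tEx C h z' u v η else 0) = 0 := by
    rw [if_pos hNuv, ht0 _ hξA, ht0 _ hη, sub_self]
  have hdsum : (∑ i : Site d n, ∑ j : Site d n,
        (if Nbr i.1 j.1 then tEx C h z' i j (Function.update η u true)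
          - tEx C h z' i j η else 0))
      = 2 * (∑ j : Site d n, (if Nbr u.1 j.1
            then tEx C h z' u j (Function.update η u true) - tEx C h z' u j η else 0))
        + 2 * (∑ j : Site d n, (if Nbr v.1 j.1
            then tEx C h z' v j (Function.update η u true) - tEx C h z' v j η else 0))
        - 2 * (if Nbr u.1 v.1 then tEx C h z' u v (Function.update η u true)
            - tEx C h z' u v η else 0) := by
    apply dsum_pair _ u v huv
    · exact fun i j => F_symm η (Function.update η u true) i j
    · rw [if_neg (nbr_irrefl u.1)]
    · rw [if_neg (nbr_irrefl v.1)]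
    · intro i j hiu hiv hju hjv
      by_cases hN : Nbr i.1 j.1
      · rw [if_pos hN]
        have hij : i ≠ j := fun hc => nbr_ne hN (congrArg Subtype.val hc)
        have hui : u ≠ i := fun hc => hiu hc.symm
        have huj : u ≠ j := fun hc => hju hc.symm
        rw [tEx_update_ne hC h01 hui huj hk ?_, sub_self]
        have e1 : (Function.update (exch i j η) u true) v = η v := by
          rw [Function.update_of_ne hvu,
            exch_apply_of_ne (fun hc => hiv hc.symm) (fun hc => hjv hc.symm)]
        have e2 : (exch i j η) u = η u := exch_apply_of_ne hui huj η
        rw [hindA _ (Or.inr (e1.trans hηv)), hindA _ (Or.inl (e2.trans hk))]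
      · rw [if_neg hN]
  -- the per-bond estimates at u
  have hlowu : ∀ j : Site d n,
      (if Nbr u.1 j.1 ∧ j.1 ≠ v.1 then (1:ℝ)/2 else 0)
        ≤ (if Nbr u.1 j.1 then tEx C h z' u j (Function.update η u true)
            - tEx C h z' u j η else 0) := by
    intro j
    by_cases hN : Nbr u.1 j.1
    · by_cases hjv : j = v
      · subst hjv
        rw [if_neg (by rintro ⟨_, hc⟩; exact hc rfl), if_pos hN, ht0 _ hξA, ht0 _ hη,
          sub_self]
      · have hjv1 : j.1 ≠ v.1 := fun hc => hjv (Subtype.ext hc)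
        have hju : j ≠ u := fun hc => nbr_irrefl u.1 (by rw [hc] at hN; exact hN)
        have huj : u ≠ j := fun hc => hju hc.symm
        have haj : (0:ℝ) < 1 + C * h j.1 := A_pos hC h01 j.1
        have h2aj : 2 * (1 + C * h j.1) ≤ 1 + C := hC2' j hju hjv (Or.inl hN)
        have hξj : (Function.update η u true) j = η j := Function.update_of_ne hju true η
        rw [if_pos ⟨hN, hjv1⟩, if_pos hN]
        by_cases hj : η j = true
        · have h1 : tEx C h z' u j (Function.update η u true) = 0 :=
            tEx_same hPξ (by rw [hξu, hξj, hj]) hξA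
          have h2 : tEx C h z' u j η = (1 + C * h j.1) / (1 + C) - 1 := by
            rw [tEx_eval hC h01 huj]
            have hind : indA z' (exch u j η) = 1 := by
              refine hindA _ (Or.inr ?_)
              rw [exch_apply_of_ne hvu (fun hc => hjv hc.symm)]
              exact hηv
            rw [hind, hk, hj, wv_true, wv_false, wv_true, wv_false, hgu, gam_eq]
            field_simp
          rw [h1, h2]
          have hd2 : (1 + C * h j.1) / (1 + C) ≤ 1/2 := by
            rw [div_le_iff₀ hCp]
            linarith
          linarith
        · have hjf : η j = false := by revert hj; cases η j <;> simp
          have h2 : tEx C h z' u j η = 0 := tEx_same hPη (hk.trans hjf.symm) hη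
          have h1 : tEx C h z' u j (Function.update η u true)
              = (1 + C) / (1 + C * h j.1) - 1 := by
            rw [tEx_eval hC h01 huj]
            have hind : indA z' (exch u j (Function.update η u true)) = 1 := by
              refine hindA _ (Or.inl ?_)
              rw [exch_apply_left, hξj]
              exact hjf
            rw [hind, hξu, hξj, hjf, wv_false, wv_true, wv_true, wv_false, hgu, gam_eq]
            field_simp
          rw [h1, h2, sub_zero]
          have : 2 ≤ (1 + C) / (1 + C * h j.1) := (le_div_iff₀ haj).mpr (by linarith)
          linarith
    · rw [if_neg (by rintro ⟨hc, _⟩; exact hN hc), if_neg hN]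
  -- the per-bond estimates at v
  have hlowv : ∀ j : Site d n,
      (-(if Nbr v.1 j.1 ∧ j.1 ≠ u.1 then (1:ℝ)/2 else 0))
        ≤ (if Nbr v.1 j.1 then tEx C h z' v j (Function.update η u true)
            - tEx C h z' v j η else 0) := by
    intro j
    by_cases hN : Nbr v.1 j.1
    · by_cases hju : j = u
      · subst hju
        rw [if_neg (by rintro ⟨_, hc⟩; exact hc rfl), if_pos hN,
          tEx_comm C h z' v j, ht0 _ hξA, tEx_comm C h z' v j, ht0 _ hη, sub_self]
        norm_num
      · have hju1 : j.1 ≠ u.1 := fun hc => hju (Subtype.ext hc)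
        have hjv : j ≠ v := fun hc => nbr_irrefl v.1 (by rw [hc] at hN; exact hN)
        have hvj : v ≠ j := fun hc => hjv hc.symm
        have huj : u ≠ j := fun hc => hju hc.symm
        have haj : (0:ℝ) < 1 + C * h j.1 := A_pos hC h01 j.1
        have h2aj : 2 * (1 + C * h j.1) ≤ 1 + C := hC2' j hju hjv (Or.inr hN)
        have hξj : (Function.update η u true) j = η j := Function.update_of_ne hju true η
        rw [if_pos hN]
        by_cases hj : η j = true
        · -- the killed transition
          have h2 : tEx C h z' v j η = (1 + C * h j.1) / (1 + C) - 1 := by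
            rw [tEx_eval hC h01 hvj]
            have hind : indA z' (exch v j η) = 1 := by
              refine hindA _ (Or.inl ?_)
              rw [exch_apply_of_ne (fun hc => huv hc) huj]
              exact hk
            rw [hind, hηv, hj, wv_true, wv_false, wv_true, wv_false, hgv, gam_eq]
            field_simp
          have h1 : tEx C h z' v j (Function.update η u true) = -1 := by
            rw [tEx_eval hC h01 hvj]
            have hind : indA z' (exch v j (Function.update η u true)) = 0 := by
              refine hindA0 _ ?_ ?_
              · rw [exch_apply_of_ne (fun hc => huv hc) huj]
                exact hξu
              · rw [exch_apply_left, hξj]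
                exact hj
            rw [hind, zero_mul, zero_div]
            norm_num
          rw [if_pos ⟨hN, hju1⟩, h1, h2]
          have hd2 : (1 + C * h j.1) / (1 + C) ≤ 1/2 := by
            rw [div_le_iff₀ hCp]
            linarith
          linarith
        · have hjf : η j = false := by revert hj; cases η j <;> simp
          have h2 : tEx C h z' v j η = 0 := tEx_same hPη (hηv.trans hjf.symm) hη
          have hξvv : (Function.update η u true) v = false := hξv.trans hηv
          have h1 : tEx C h z' v j (Function.update η u true) = 0 :=
            tEx_same hPξ (by rw [hξvv, hξj, hjf]) hξA
          rw [h1, h2, sub_self]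
          split_ifs <;> norm_num
    · rw [if_neg hN, if_neg (by rintro ⟨hc, _⟩; exact hN hc)]
      norm_num
  -- put everything together
  have hsumu := Finset.sum_le_sum (s := (Finset.univ : Finset (Site d n)))
    (fun j _ => hlowu j)
  rw [count_sum hd u v hsubu hNuv] at hsumu
  have hsumv := Finset.sum_le_sum (s := (Finset.univ : Finset (Site d n)))
    (fun j _ => hlowv j)
  rw [Finset.sum_neg_distrib, count_sum hd v u hsubv (nbr_symm hNuv)] at hsumv
  rw [hdsum, hbd, hb, mul_zero, add_zero, add_zero, hFuv, mul_zero, sub_zero]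
  have : (2 * (∑ j : Site d n, (if Nbr u.1 j.1
        then tEx C h z' u j (Function.update η u true) - tEx C h z' u j η else 0))
      + 2 * (∑ j : Site d n, (if Nbr v.1 j.1
        then tEx C h z' v j (Function.update η u true) - tEx C h z' v j η else 0))) / 2
      = (∑ j : Site d n, (if Nbr u.1 j.1
          then tEx C h z' u j (Function.update η u true) - tEx C h z' u j η else 0))
        + (∑ j : Site d n, (if Nbr v.1 j.1
          then tEx C h z' v j (Function.update η u true) - tEx C h z' v j η else 0)) := by
    ring
  rw [this]
  linarith

end SSEP
namespace SSEP

variable {d n : ℕ} {ρ β C : ℝ} {h : (Fin d → ℤ) → ℝ} {z' : Site d n}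

lemma bool_le_imp : ∀ {b c : Bool}, b ≤ c → b = true → c = true := by decide

lemma bool_ne_le : ∀ {b c : Bool}, b ≤ c → b ≠ c → b = false ∧ c = true := by decide

lemma step_all (hd : 1 ≤ d) (hn : 2 ≤ n) (hρ : ρ ∈ Set.Ioo (0:ℝ) 1)
    (hz' : Nbr (0 : Fin d → ℤ) z'.1)
    (h01 : ∀ i, h i ∈ Set.Icc (0:ℝ) 1) (h0 : h 0 = 1) (h0' : h z'.1 = 1)
    (hout : ∀ i ∉ Lam d n, h i = 0)
    (hharm : ∀ i ∈ Lam d n, i ≠ 0 → i ≠ z'.1 →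
      2 * (d : ℝ) * h i = ∑ j ∈ nbrFinset i, h j)
    (hC : 0 < C)
    (hC2 : ∀ x : Fin d → ℤ, x ≠ 0 → x ≠ z'.1 →
      (Nbr (0 : Fin d → ℤ) x ∨ Nbr z'.1 x) → 2 * (1 + C * h x) ≤ 1 + C)
    {η : Conf d n} {k : Site d n} (hk : η k = false)
    (hξA : ¬((Function.update η k true) (site0 d n) = true ∧
        (Function.update η k true) z' = true)) :
    Wf ρ β C h z' η ≤ Wf ρ β C h z' (Function.update η k true) := by
  -- η is also off A₂
  have hη : ¬(η (site0 d n) = true ∧ η z' = true) := by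
    rintro ⟨c1, c2⟩
    apply hξA
    constructor
    · by_cases hc : site0 d n = k
      · rw [hc, Function.update_self]
      · rw [Function.update_of_ne hc]; exact c1
    · by_cases hc : z' = k
      · rw [hc, Function.update_self]
      · rw [Function.update_of_ne hc]; exact c2
  have hsub0 : ∀ y, Nbr (site0 d n).1 y → y ∈ Lam d n := by
    refine nbrs_in_Lam hn fun m => ?_
    rw [site0_val]
    simp
  have hsubz : ∀ y, Nbr z'.1 y → y ∈ Lam d n := by
    refine nbrs_in_Lam hn fun m => ?_
    have := nbr_abs_le hz' m
    simpa using this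
  have h0z : site0 d n ≠ z' := by
    intro he
    exact nbr_ne hz' (by rw [← he]; rfl)
  have hN0z : Nbr (site0 d n).1 z'.1 := by rw [site0_val]; exact hz'
  by_cases hk0 : k = site0 d n
  · subst hk0
    refine step_case2 hd hρ hz' h01 h0 h0' hC h0z hN0z (fun σ => Iff.rfl)
      (by rw [site0_val]; exact h0) h0' hsub0 hsubz ?_ ?_ hk hη hξA
    · intro j hj0 hjz hor
      refine hC2 j.1 (fun hc => hj0 (Subtype.ext (hc.trans site0_val.symm)))
        (fun hc => hjz (Subtype.ext hc)) ?_
      rcases hor with h1 | h1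
      · exact Or.inl (by rw [site0_val] at h1; exact h1)
      · exact Or.inr h1
    · exact fun σ hA => tEx_bond_zero hC h01 hz' h0 h0' hA
  · by_cases hkz : k = z'
    · subst hkz
      refine step_case2 hd hρ hz' h01 h0 h0' hC (Ne.symm h0z) (nbr_symm hN0z)
        (fun σ => and_comm) h0' (by rw [site0_val]; exact h0) hsubz hsub0 ?_ ?_ hk hη hξA
      · intro j hjz hj0 hor
        refine hC2 j.1 (fun hc => hj0 (Subtype.ext (hc.trans site0_val.symm)))
          (fun hc => hjz (Subtype.ext hc)) ?_
        rcases hor with h1 | h1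
        · exact Or.inr h1
        · exact Or.inl (by rw [site0_val] at h1; exact h1)
      · intro σ hA
        rw [tEx_comm]
        exact tEx_bond_zero hC h01 hz' h0 h0' hA
    · exact step_case1 hρ hz' h01 h0 h0' hout hharm hC hC2 hk hk0 hkz hη hξA

lemma W_mono (hd : 1 ≤ d) (hn : 2 ≤ n) (hρ : ρ ∈ Set.Ioo (0:ℝ) 1)
    (hz' : Nbr (0 : Fin d → ℤ) z'.1)
    (h01 : ∀ i, h i ∈ Set.Icc (0:ℝ) 1) (h0 : h 0 = 1) (h0' : h z'.1 = 1)
    (hout : ∀ i ∉ Lam d n, h i = 0)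
    (hharm : ∀ i ∈ Lam d n, i ≠ 0 → i ≠ z'.1 →
      2 * (d : ℝ) * h i = ∑ j ∈ nbrFinset i, h j)
    (hC : 0 < C)
    (hC2 : ∀ x : Fin d → ℤ, x ≠ 0 → x ≠ z'.1 →
      (Nbr (0 : Fin d → ℤ) x ∨ Nbr z'.1 x) → 2 * (1 + C * h x) ≤ 1 + C) :
    ∀ (m : ℕ) (η ζ : Conf d n), η ≤ ζ →
      ¬(ζ (site0 d n) = true ∧ ζ z' = true) →
      (Finset.univ.filter (fun i => η i ≠ ζ i)).card = m →
      Wf ρ β C h z' η ≤ Wf ρ β C h z' ζ := by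
  intro m
  induction m with
  | zero =>
    intro η ζ hle hζ hcard
    have hfe : ∀ i, η i = ζ i := by
      intro i
      by_contra hc
      have : i ∈ Finset.univ.filter (fun i => η i ≠ ζ i) :=
        Finset.mem_filter.mpr ⟨Finset.mem_univ i, hc⟩
      rw [Finset.card_eq_zero.mp hcard] at this
      exact absurd this (Finset.notMem_empty i)
    exact le_of_eq (congrArg (Wf ρ β C h z') (funext hfe))
  | succ m ih =>
    intro η ζ hle hζ hcard
    have hne : (Finset.univ.filter (fun i => η i ≠ ζ i)).Nonempty :=
      Finset.card_pos.mp (by omega)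
    obtain ⟨k, hkmem⟩ := hne
    have hkne : η k ≠ ζ k := (Finset.mem_filter.mp hkmem).2
    obtain ⟨hkF, hkT⟩ := bool_ne_le (hle k) hkne
    have hξle : Function.update η k true ≤ ζ := by
      intro i
      by_cases hi : i = k
      · subst hi; rw [Function.update_self, hkT]
      · rw [Function.update_of_ne hi]; exact hle i
    have hξA : ¬((Function.update η k true) (site0 d n) = true ∧
        (Function.update η k true) z' = true) := by
      rintro ⟨c1, c2⟩
      exact hζ ⟨bool_le_imp (hξle (site0 d n)) c1, bool_le_imp (hξle z') c2⟩
    have hstep := step_all (ρ := ρ) (β := β) hd hn hρ hz' h01 h0 h0' hout hharm hC hC2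
      hkF hξA
    refine le_trans hstep (ih (Function.update η k true) ζ hξle hζ ?_)
    have hfilter : Finset.univ.filter (fun i => Function.update η k true i ≠ ζ i)
        = (Finset.univ.filter (fun i => η i ≠ ζ i)).erase k := by
      ext i
      rw [Finset.mem_filter, Finset.mem_erase, Finset.mem_filter]
      constructor
      · rintro ⟨_, hne'⟩
        by_cases hi : i = k
        · exfalso
          apply hne'
          subst hi
          rw [Function.update_self, hkT]
        · rw [Function.update_of_ne hi] at hne'
          exact ⟨hi, Finset.mem_univ i, hne'⟩
      · rintro ⟨hi, _, hne'⟩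
        rw [← Function.update_of_ne hi true η] at hne'
        exact ⟨Finset.mem_univ i, hne'⟩
    rw [hfilter, Finset.card_erase_of_mem hkmem, hcard]
    omega

end SSEP
/-- **Key step in the proof of Proposition 1.4.**  For `A₂ = {η : η(0) = η(0') = 1}`,
if `2(1 + C h(k)) ≤ 1 + C` for every `k ∉ {0,0'}` with `k ∼ 0` or `k ∼ 0'`, then for
every `β > 0` the function `V = L_β^{n,ρ}ψ/ψ` is increasing on `A₂^c`. -/
theorem potential_increasing_A2
    {d n : ℕ} (hd : 1 ≤ d) (hn : 2 ≤ n)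
    (ρ : ℝ) (hρ : ρ ∈ Set.Ioo (0 : ℝ) 1)
    (z' : Site d n) (hz' : Nbr (0 : Fin d → ℤ) z'.1)
    (h : (Fin d → ℤ) → ℝ)
    (h01 : ∀ i, h i ∈ Set.Icc (0 : ℝ) 1)
    (h0 : h 0 = 1) (h0' : h z'.1 = 1)
    (hout : ∀ i ∉ Lam d n, h i = 0)
    (hharm : ∀ i ∈ Lam d n, i ≠ 0 → i ≠ z'.1 →
      2 * (d : ℝ) * h i = ∑ j ∈ nbrFinset i, h j)
    (C : ℝ) (hC : 0 < C)
    (hC2 : ∀ k : Fin d → ℤ, k ≠ 0 → k ≠ z'.1 →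
      (Nbr (0 : Fin d → ℤ) k ∨ Nbr z'.1 k) → 2 * (1 + C * h k) ≤ 1 + C)
    (β : ℝ) (hβ : 0 < β) :
    ∀ η ζ : Conf d n, η ≤ ζ →
      ¬(η (site0 d n) = true ∧ η z' = true) → ¬(ζ (site0 d n) = true ∧ ζ z' = true) →
      Lbeta ρ β z' (psiTwo C h z') η / psiTwo C h z' η ≤
        Lbeta ρ β z' (psiTwo C h z') ζ / psiTwo C h z' ζ := by
  intro η ζ hle hηA hζA
  rw [SSEP.V_eq_W (ne_of_gt (SSEP.Pf_pos hC h01 η)) hηA,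
    SSEP.V_eq_W (ne_of_gt (SSEP.Pf_pos hC h01 ζ)) hζA]
  exact SSEP.W_mono hd hn hρ hz' h01 h0 h0' hout hharm hC hC2 _ η ζ hle hζA rfl
end
end

section
/- Finite-state version of Proposition 1.8(ii). For every nonzero p : S → [0,∞) and every g : S → ℝ, lim_{t→∞} [Σ_{x∈S} p(x)(e^{tM}g)(x)] / [Σ_{x∈S} p(x)(e^{tM}1)(x)] = ⟨g, u⟩_ν / ⟨1, u⟩_ν, where 1 denotes the constant function equal to one; that is, the conditioned law at time t started from p converges to the probability measure μ(x) = u(x)ν(x)/⟨1,u⟩_ν. -/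
noncomputable section

open Matrix
open scoped Nat

/-- Inner product `⟨f,g⟩_ν = Σ_x f(x) g(x) ν(x)`. -/
def ipNu {S : Type*} [Fintype S] (ν f g : S → ℝ) : ℝ := ∑ x, f x * g x * ν x

lemma exp_mulVec_eigen {S : Type*} [Fintype S] [DecidableEq S]
    (B : Matrix S S ℝ) (v : S → ℝ) (μ : ℝ) (h : B.mulVec v = μ • v) :
    (NormedSpace.exp B).mulVec v = Real.exp μ • v := by
  letI : SeminormedRing (Matrix S S ℝ) := Matrix.linftyOpSemiNormedRing
  letI : NormedRing (Matrix S S ℝ) := Matrix.linftyOpNormedRing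
  letI : NormedAlgebra ℝ (Matrix S S ℝ) := Matrix.linftyOpNormedAlgebra
  have hpow : ∀ n : ℕ, (B ^ n).mulVec v = (μ ^ n) • v := by
    intro n
    induction n with
    | zero => simp
    | succ n ih =>
      rw [pow_succ, ← Matrix.mulVec_mulVec, h, Matrix.mulVec_smul, ih, smul_smul, ← pow_succ']
  let T : Matrix S S ℝ →L[ℝ] (S → ℝ) :=
    LinearMap.toContinuousLinearMap
      { toFun := fun C => C.mulVec v
        map_add' := fun C D => by ext x; simp [Matrix.add_mulVec]
        map_smul' := fun c C => by ext x; simp [Matrix.smul_mulVec] }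
  have hT : ∀ C : Matrix S S ℝ, T C = C.mulVec v := fun _ => rfl
  have hsum : Summable fun n : ℕ => ((n ! : ℝ))⁻¹ • B ^ n :=
    NormedSpace.expSeries_summable' B
  have h1 : (NormedSpace.exp B).mulVec v = ∑' n : ℕ, ((n ! : ℝ))⁻¹ • (B ^ n).mulVec v := by
    rw [← hT, NormedSpace.exp_eq_tsum (𝕂 := ℝ)]
    rw [T.map_tsum hsum]
    congr 1; funext n
    rw [T.map_smul, hT]
  rw [h1]
  have h2 : ∀ n : ℕ, ((n ! : ℝ))⁻¹ • (B ^ n).mulVec v = (((n ! : ℝ))⁻¹ * μ ^ n) • v := by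
    intro n; rw [hpow, smul_smul]
  simp_rw [h2]
  rw [Summable.tsum_smul_const]
  · congr 1
    rw [Real.exp_eq_exp_ℝ, NormedSpace.exp_eq_tsum (𝕂 := ℝ)]
    simp_rw [smul_eq_mul]
  · have := NormedSpace.expSeries_summable' (𝕂 := ℝ) μ
    simpa [smul_eq_mul] using this

/-- **Finite-state version of Proposition 1.8(ii).**
For every nonzero `p : S → [0,∞)` and every `g : S → ℝ`, the conditioned law at
time `t` started from `p` converges: `[Σ_x p(x)(e^{tM}g)(x)] / [Σ_x p(x)(e^{tM}1)(x)]
→ ⟨g,u⟩_ν / ⟨1,u⟩_ν` as `t → ∞`. -/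
theorem conditioned_law_limit
    {S : Type*} [Fintype S] [DecidableEq S] [Nonempty S]
    (ν : S → ℝ) (hν : ∀ x, 0 < ν x)
    (M : Matrix S S ℝ)
    (hM_offdiag : ∀ x y, x ≠ y → 0 ≤ M x y)
    (hM_row : ∀ x, ∑ y, M x y ≤ 0)
    (hM_symm : ∀ x y, ν x * M x y = ν y * M y x)
    (lam : ℝ) (hlam : 0 < lam)
    (u : S → ℝ) (hu : ∀ x, 0 < u x)
    (heig : M.mulVec u = (-lam) • u)
    (hsimple : ∀ v : S → ℝ, M.mulVec v = (-lam) • v → ∃ c : ℝ, v = c • u)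
    (hdom : ∀ (c : ℝ) (v : S → ℝ), v ≠ 0 → M.mulVec v = c • v → c ≤ -lam)
    (p : S → ℝ) (hp : ∀ x, 0 ≤ p x) (hp0 : p ≠ 0) (g : S → ℝ) :
    Filter.Tendsto
      (fun t : ℝ =>
        (∑ x, p x * (NormedSpace.exp (t • M)).mulVec g x) /
          (∑ x, p x * (NormedSpace.exp (t • M)).mulVec (fun _ => 1) x))
      Filter.atTop
      (nhds (ipNu ν g u / ipNu ν (fun _ => 1) u)) := by
  classical
  -- the symmetrizing diagonal weight
  set D : S → ℝ := fun x => Real.sqrt (ν x) with hD_def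
  have hD : ∀ x, 0 < D x := fun x => Real.sqrt_pos.2 (hν x)
  have hD0 : ∀ x, D x ≠ 0 := fun x => (hD x).ne'
  have hDD : ∀ x, D x * D x = ν x := fun x => Real.mul_self_sqrt (hν x).le
  -- the symmetrized matrix
  set A : Matrix S S ℝ := Matrix.of (fun x y => D x * M x y * (D y)⁻¹) with hA_def
  have hAapp : ∀ x y, A x y = D x * M x y * (D y)⁻¹ := fun x y => rfl
  have hsymA : ∀ x y, A x y = A y x := by
    intro x y
    rw [hAapp, hAapp]
    have h := hM_symm x y
    rw [← hDD x, ← hDD y] at h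
    field_simp [hD0 x, hD0 y]
    linear_combination h
  have hA : A.IsHermitian := by
    ext x y
    simp only [Matrix.conjTranspose_apply, star_trivial]
    exact hsymA y x
  set b := hA.eigenvectorBasis with hb_def
  set μ := hA.eigenvalues with hμ_def
  set v : S → S → ℝ := fun j => ⇑(b j) with hv_def
  have hval : ∀ j, A.mulVec (v j) = μ j • v j := fun j => hA.mulVec_eigenvectorBasis j
  -- expansion in the eigenbasis
  have hexpand : ∀ f : S → ℝ, ∀ x, f x = ∑ j, (∑ y, v j y * f y) * v j x := by
    intro f x
    have h := b.sum_repr' ((WithLp.equiv 2 (S → ℝ)).symm f)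
    have h' := congrArg (fun z : EuclideanSpace ℝ S => z x) h
    simp only [WithLp.ofLp_sum] at h'
    simp only [WithLp.equiv_symm_apply, WithLp.ofLp_toLp] at h'
    rw [← h']
    rw [Finset.sum_apply]
    refine Finset.sum_congr rfl fun j _ => ?_
    simp [PiLp.inner_apply, RCLike.inner_apply, WithLp.equiv_symm_apply, mul_comm, hv_def]
  have horthit : ∀ j k, (∑ x, v j x * v k x) = if j = k then 1 else 0 := by
    intro j k
    have h := b.orthonormal
    rw [orthonormal_iff_ite] at h
    have := h j k
    simpa [PiLp.inner_apply, RCLike.inner_apply, hv_def, mul_comm] using this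
  have hvne : ∀ j, v j ≠ 0 := by
    intro j hj
    have := horthit j j
    simp [hj] at this
  -- eigenvectors of M
  set w : S → S → ℝ := fun j x => (D x)⁻¹ * v j x with hw_def
  have hwv : ∀ j x, v j x = D x * w j x := by
    intro j x
    exact (mul_inv_cancel_left₀ (hD0 x) (v j x)).symm
  have hMw : ∀ j, M.mulVec (w j) = μ j • w j := by
    intro j
    funext x
    have h1 := congrFun (hval j) x
    have h2 : (A.mulVec (v j)) x = D x * ∑ y, M x y * w j y := by
      simp only [Matrix.mulVec, dotProduct, hAapp, Finset.mul_sum]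
      refine Finset.sum_congr rfl fun y _ => ?_
      rw [hw_def]
      ring
    have h3 : (M.mulVec (w j)) x = ∑ y, M x y * w j y := rfl
    rw [h2] at h1
    have h4 : D x * ∑ y, M x y * w j y = D x * (μ j * w j x) := by
      rw [h1]
      simp only [Pi.smul_apply, smul_eq_mul]
      rw [hwv j x]
      ring
    have h5 := mul_left_cancel₀ (hD0 x) h4
    rw [h3, h5]
    simp
  have hwne : ∀ j, w j ≠ 0 := by
    intro j hj
    apply hvne j
    funext x
    rw [hwv j x, hj]
    simp
  have hμle : ∀ j, μ j ≤ -lam := fun j => hdom (μ j) (w j) (hwne j) (hMw j)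
  -- the distinguished eigenvector
  set W : S → ℝ := fun x => D x * u x with hW_def
  have hWpos : ∀ x, 0 < W x := fun x => mul_pos (hD x) (hu x)
  have hAW : A.mulVec W = (-lam) • W := by
    funext x
    have h1 : (A.mulVec W) x = D x * ∑ y, M x y * u y := by
      simp only [Matrix.mulVec, dotProduct, hAapp, Finset.mul_sum]
      refine Finset.sum_congr rfl fun y _ => ?_
      rw [hW_def]
      field_simp [hD0 y]
    have h2 := congrFun heig x
    have h3 : (M.mulVec u) x = ∑ y, M x y * u y := rfl
    rw [h3] at h2
    rw [h1, h2]
    simp only [Pi.smul_apply, smul_eq_mul, hW_def]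
    ring
  -- symmetry of the bilinear form
  have hsym_dot : ∀ f f' : S → ℝ,
      (∑ x, (A.mulVec f) x * f' x) = ∑ x, f x * (A.mulVec f') x := by
    intro f f'
    simp only [Matrix.mulVec, dotProduct, Finset.sum_mul, Finset.mul_sum]
    rw [Finset.sum_comm]
    refine Finset.sum_congr rfl fun x _ => Finset.sum_congr rfl fun y _ => ?_
    rw [hsymA y x]
    ring
  -- indices with eigenvalue -lam
  have heigopt : ∀ j, μ j = -lam ∨ (∑ y, v j y * W y) = 0 := by
    intro j
    have e1 : (∑ x, (A.mulVec (v j)) x * W x) = μ j * ∑ y, v j y * W y := by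
      rw [hval j]
      simp only [Pi.smul_apply, smul_eq_mul, Finset.mul_sum]
      refine Finset.sum_congr rfl fun y _ => by ring
    have e2 : (∑ x, v j x * (A.mulVec W) x) = (-lam) * ∑ y, v j y * W y := by
      rw [hAW]
      simp only [Pi.smul_apply, smul_eq_mul, Finset.mul_sum]
      refine Finset.sum_congr rfl fun y _ => by ring
    have e3 := hsym_dot (v j) W
    rw [e1, e2] at e3
    rcases mul_eq_mul_right_iff.1 e3 with h | h
    · exact Or.inl h
    · exact Or.inr h
  have hsimp' : ∀ j, μ j = -lam → ∃ c : ℝ, c ≠ 0 ∧ ∀ x, v j x = c * W x := by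
    intro j hj
    have := hMw j
    rw [hj] at this
    obtain ⟨c, hc⟩ := hsimple (w j) this
    refine ⟨c, ?_, ?_⟩
    · intro h0
      apply hwne j
      rw [hc, h0]
      simp
    · intro x
      rw [hwv j x, hc]
      simp only [Pi.smul_apply, smul_eq_mul, hW_def]
      ring
  have hWsq : 0 < ∑ x, W x * W x :=
    Finset.sum_pos (fun x _ => mul_pos (hWpos x) (hWpos x)) Finset.univ_nonempty
  -- existence of the principal index
  have hexists : ∃ j₀, μ j₀ = -lam := by
    by_contra hno
    push_neg at hno
    have hall : ∀ j, (∑ y, v j y * W y) = 0 := by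
      intro j
      rcases heigopt j with h | h
      · exact absurd h (hno j)
      · exact h
    obtain ⟨x⟩ := (inferInstance : Nonempty S)
    have := hexpand W x
    simp only [hall, zero_mul, Finset.sum_const_zero] at this
    exact (hWpos x).ne' this
  obtain ⟨j₀, hj₀⟩ := hexists
  obtain ⟨c, hc0, hcW⟩ := hsimp' j₀ hj₀
  -- uniqueness of the principal index
  have hlt : ∀ j, j ≠ j₀ → μ j < -lam := by
    intro j hj
    rcases lt_or_eq_of_le (hμle j) with h | h
    · exact h
    · exfalso
      obtain ⟨c', hc'0, hc'W⟩ := hsimp' j h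
      have horth := horthit j j₀
      rw [if_neg hj] at horth
      have : (∑ x, v j x * v j₀ x) = c' * c * ∑ x, W x * W x := by
        rw [Finset.mul_sum]
        refine Finset.sum_congr rfl fun x _ => ?_
        rw [hc'W x, hcW x]
        ring
      rw [horth] at this
      have := this.symm
      rcases mul_eq_zero.1 this with h' | h'
      · rcases mul_eq_zero.1 h' with h'' | h''
        · exact hc'0 h''
        · exact hc0 h''
      · exact hWsq.ne' h'
  -- representation of an arbitrary function in terms of the w j
  have hrep : ∀ f : S → ℝ, f = ∑ j, (∑ y, v j y * (D y * f y)) • w j := by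
    intro f
    funext x
    have h := hexpand (fun y => D y * f y) x
    have h2 : f x = (D x)⁻¹ * (D x * f x) := (inv_mul_cancel_left₀ (hD0 x) (f x)).symm
    rw [Finset.sum_apply]
    rw [h2, h, Finset.mul_sum]
    refine Finset.sum_congr rfl fun j _ => ?_
    simp only [Pi.smul_apply, smul_eq_mul, hw_def]
    ring
  -- action of the semigroup
  have hexp_apply : ∀ (t : ℝ) (f : S → ℝ),
      (NormedSpace.exp (t • M)).mulVec f
        = ∑ j, ((∑ y, v j y * (D y * f y)) * Real.exp (t * μ j)) • w j := by
    intro t f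
    conv_lhs => rw [hrep f]
    have hmv : (NormedSpace.exp (t • M)).mulVec (∑ j, (∑ y, v j y * (D y * f y)) • w j)
        = ∑ j, (∑ y, v j y * (D y * f y)) • (NormedSpace.exp (t • M)).mulVec (w j) := by
      rw [← Matrix.mulVecLin_apply, map_sum]
      refine Finset.sum_congr rfl fun j _ => ?_
      rw [_root_.map_smul, Matrix.mulVecLin_apply]
    rw [hmv]
    refine Finset.sum_congr rfl fun j _ => ?_
    have heigw : (t • M).mulVec (w j) = (t * μ j) • w j := by
      rw [Matrix.smul_mulVec, hMw j, smul_smul]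
    rw [exp_mulVec_eigen (t • M) (w j) (t * μ j) heigw, smul_smul]
  -- the key identity for the numerator and denominator
  have hkey : ∀ (t : ℝ) (f : S → ℝ),
      (∑ x, p x * (NormedSpace.exp (t • M)).mulVec f x)
        = ∑ j, Real.exp (t * μ j) *
            ((∑ y, v j y * (D y * f y)) * (∑ x, p x * w j x)) := by
    intro t f
    rw [hexp_apply t f]
    simp only [Finset.sum_apply, Pi.smul_apply, smul_eq_mul, Finset.mul_sum]
    rw [Finset.sum_comm]
    refine Finset.sum_congr rfl fun j _ => Finset.sum_congr rfl fun x _ => by ring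
  -- names for the coefficients
  set α : S → ℝ := fun j => ∑ x, p x * w j x with hα_def
  set βg : S → ℝ := fun j => ∑ y, v j y * (D y * g y) with hβg_def
  set β1 : S → ℝ := fun j => ∑ y, v j y * (D y * 1) with hβ1_def
  -- the general limit lemma
  have hlim : ∀ κ : S → ℝ,
      Filter.Tendsto (fun t : ℝ => ∑ j, Real.exp (t * (μ j + lam)) * κ j)
        Filter.atTop (nhds (κ j₀)) := by
    intro κ
    have : (κ j₀) = ∑ j, if j = j₀ then κ j else 0 := by
      rw [Finset.sum_ite_eq' Finset.univ j₀ κ]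
      simp
    rw [this]
    apply tendsto_finset_sum
    intro j _
    by_cases hj : j = j₀
    · subst hj
      have hz : μ j + lam = 0 := by rw [hj₀]; ring
      simp only [if_pos rfl, hz, mul_zero, Real.exp_zero, one_mul]
      exact tendsto_const_nhds
    · rw [if_neg hj]
      have hneg : μ j + lam < 0 := by
        have := hlt j hj
        linarith
      have h1 : Filter.Tendsto (fun t : ℝ => t * (μ j + lam)) Filter.atTop Filter.atBot :=
        Filter.Tendsto.atTop_mul_const_of_neg hneg Filter.tendsto_id
      have h2 : Filter.Tendsto (fun t : ℝ => Real.exp (t * (μ j + lam)))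
          Filter.atTop (nhds 0) := Real.tendsto_exp_atBot.comp h1
      have := h2.mul_const (κ j)
      rw [zero_mul] at this
      exact this
  -- positivity facts
  have hP : 0 < ∑ x, p x * u x := by
    obtain ⟨x₀, hx₀⟩ : ∃ x, p x ≠ 0 := by
      by_contra h
      push_neg at h
      exact hp0 (funext h)
    refine Finset.sum_pos' (fun x _ => mul_nonneg (hp x) (hu x).le) ⟨x₀, Finset.mem_univ _, ?_⟩
    exact mul_pos (lt_of_le_of_ne (hp x₀) (Ne.symm hx₀)) (hu x₀)
  have hip1 : 0 < ipNu ν (fun _ => 1) u := by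
    rw [ipNu]
    exact Finset.sum_pos (fun x _ => by
      simpa using mul_pos (hu x) (hν x)) Finset.univ_nonempty
  -- values of the principal coefficients
  have hαj₀ : α j₀ = c * ∑ x, p x * u x := by
    rw [hα_def, Finset.mul_sum]
    refine Finset.sum_congr rfl fun x _ => ?_
    simp only [hw_def]
    rw [hcW x]
    simp only [hW_def]
    field_simp [hD0 x]
  have hβgj₀ : βg j₀ = c * ipNu ν g u := by
    rw [hβg_def, ipNu, Finset.mul_sum]
    refine Finset.sum_congr rfl fun y _ => ?_
    rw [hcW y]
    simp only [hW_def]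
    rw [← hDD y]
    ring
  have hβ1j₀ : β1 j₀ = c * ipNu ν (fun _ => 1) u := by
    rw [hβ1_def, ipNu, Finset.mul_sum]
    refine Finset.sum_congr rfl fun y _ => ?_
    rw [hcW y]
    simp only [hW_def]
    rw [← hDD y]
    ring
  -- identities connecting the rescaled sums with the spectral sums
  have hNid : ∀ t : ℝ,
      Real.exp (t * lam) * (∑ x, p x * (NormedSpace.exp (t • M)).mulVec g x)
        = ∑ j, Real.exp (t * (μ j + lam)) * (βg j * α j) := by
    intro t
    rw [hkey t g, Finset.mul_sum]
    refine Finset.sum_congr rfl fun j _ => ?_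
    rw [mul_add t, Real.exp_add]
    ring
  have hDid : ∀ t : ℝ,
      Real.exp (t * lam) * (∑ x, p x * (NormedSpace.exp (t • M)).mulVec (fun _ => 1) x)
        = ∑ j, Real.exp (t * (μ j + lam)) * (β1 j * α j) := by
    intro t
    rw [hkey t (fun _ => 1), Finset.mul_sum]
    refine Finset.sum_congr rfl fun j _ => ?_
    rw [mul_add t, Real.exp_add]
    ring
  have hN : Filter.Tendsto
      (fun t : ℝ => Real.exp (t * lam) * ∑ x, p x * (NormedSpace.exp (t • M)).mulVec g x)
      Filter.atTop (nhds (βg j₀ * α j₀)) :=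
    (hlim (fun j => βg j * α j)).congr (fun t => (hNid t).symm)
  have hDen : Filter.Tendsto
      (fun t : ℝ => Real.exp (t * lam) *
        ∑ x, p x * (NormedSpace.exp (t • M)).mulVec (fun _ => 1) x)
      Filter.atTop (nhds (β1 j₀ * α j₀)) :=
    (hlim (fun j => β1 j * α j)).congr (fun t => (hDid t).symm)
  have hden_ne : β1 j₀ * α j₀ ≠ 0 := by
    rw [hβ1j₀, hαj₀]
    exact mul_ne_zero (mul_ne_zero hc0 hip1.ne') (mul_ne_zero hc0 hP.ne')
  have hval2 : (βg j₀ * α j₀) / (β1 j₀ * α j₀) = ipNu ν g u / ipNu ν (fun _ => 1) u := by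
    rw [hβgj₀, hβ1j₀, hαj₀]
    have h1 : c * ipNu ν g u * (c * ∑ x, p x * u x)
        = (c * (c * ∑ x, p x * u x)) * ipNu ν g u := by ring
    have h2 : c * ipNu ν (fun _ => 1) u * (c * ∑ x, p x * u x)
        = (c * (c * ∑ x, p x * u x)) * ipNu ν (fun _ => 1) u := by ring
    rw [h1, h2]
    exact mul_div_mul_left _ _ (mul_ne_zero hc0 (mul_ne_zero hc0 hP.ne'))
  rw [← hval2]
  refine Filter.Tendsto.congr (fun t => ?_) (Filter.Tendsto.div hN hDen hden_ne)
  exact mul_div_mul_left _ _ (Real.exp_ne_zero _)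
end
end
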